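/- Let (H, Δ, ε, S) be a Hopf algebra over a field k and let R = Σ R'_i ⊗ R''_i ∈ H ⊗ H be an invertible element (with inverse R⁻¹) satisfying the Long copairing conditions: (LC1) (R'_i)x ⊗ R''_i = x(R'_i) ⊗ R''_i for all x ∈ H; (LC2) ε(R'_i)R''_i = 1; (LC3) (Δ ⊗ id)(R) = Σ R'_i ⊗ r'_i ⊗ r''_i R''_i; (LC4) R'_i ε(R''_i) = 1; (LC5) (id ⊗ Δ)(R) = Σ R'_i r'_i ⊗ R''_i ⊗ r''_i, where r is a second copy of R. Define Δ_R(h) = Σ R'_i h_1 (R'_i)⁻¹ ⊗ R''_i h_2 (R''_i)⁻¹ (conjugation of Δ(h) by R in H ⊗ H), which makes (H, Δ_R, ε) a Hopf algebra with antipode S^R(x) = R'_i S(R''_i) S(x) S((R'_i)⁻¹)(R''_i)⁻¹. Then (H, Δ, Δ_R) is a Hopf brace, i.e. h_{1_R} ⊗ (h_{2_R})_1 ⊗ (h_{2_R})_2 = h_{1 1_R} S(h_2) h_{3 1_R} ⊗ h_{1 2_R} ⊗ h_{3 2_R} for all h ∈ H, where Δ_R(h) = h_{1_R} ⊗ h_{2_R}.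 -/

import Mathlib

open TensorProduct

noncomputable section
set_option maxHeartbeats 1000000
set_option synthInstance.maxHeartbeats 400000

namespace HopfPaper

/-- A Hopf algebra structure (comultiplication `Δ`, counit `ε`, antipode `S`) on a
given `k`-algebra `H`, expressed in terms of `k`-linear maps.  Together with the
algebra structure of `H` this is exactly the data of a Hopf algebra
`(H, m, 1, Δ, ε, S)` over the field `k`. -/
structure HopfStruct (k : Type*) [Field k] (H : Type*) [Ring H] [Algebra k H] where
  /-- the comultiplication -/
  Δ : H →ₗ[k] H ⊗[k] H
  /-- the counit -/
  ε : H →ₗ[k] k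
  /-- the antipode -/
  S : H →ₗ[k] H
  coassoc : ∀ h : H,
    TensorProduct.map (LinearMap.id : H →ₗ[k] H) Δ (Δ h)
      = TensorProduct.assoc k H H H
          (TensorProduct.map Δ (LinearMap.id : H →ₗ[k] H) (Δ h))
  counit_left : ∀ h : H,
    TensorProduct.lid k H (TensorProduct.map ε (LinearMap.id : H →ₗ[k] H) (Δ h)) = h
  counit_right : ∀ h : H,
    TensorProduct.rid k H (TensorProduct.map (LinearMap.id : H →ₗ[k] H) ε (Δ h)) = h
  comul_mul : ∀ a b : H, Δ (a * b) = Δ a * Δ b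
  comul_one : Δ 1 = 1
  counit_mul : ∀ a b : H, ε (a * b) = ε a * ε b
  counit_one : ε 1 = 1
  antipode_left : ∀ h : H,
    LinearMap.mul' k H (TensorProduct.map S (LinearMap.id : H →ₗ[k] H) (Δ h))
      = algebraMap k H (ε h)
  antipode_right : ∀ h : H,
    LinearMap.mul' k H (TensorProduct.map (LinearMap.id : H →ₗ[k] H) S (Δ h))
      = algebraMap k H (ε h)

variable (k : Type*) [Field k]

/-- `m ↦ m ⊗ 1`. -/
def ι₁ (M N : Type*) [Ring M] [Algebra k M] [Ring N] [Algebra k N] :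
    M →ₗ[k] M ⊗[k] N :=
  (TensorProduct.mk k M N).flip 1

/-- `n ↦ 1 ⊗ n`. -/
def ι₂ (M N : Type*) [Ring M] [Algebra k M] [Ring N] [Algebra k N] :
    N →ₗ[k] M ⊗[k] N :=
  TensorProduct.mk k M N 1

/-- multiplication of three factors, `x ⊗ (y ⊗ z) ↦ x * y * z`. -/
def mul₃ (T : Type*) [Ring T] [Algebra k T] : T ⊗[k] (T ⊗[k] T) →ₗ[k] T :=
  (LinearMap.mul' k T).comp
    (TensorProduct.map (LinearMap.id : T →ₗ[k] T) (LinearMap.mul' k T))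

/-- multiplication of four factors. -/
def mul₄ (T : Type*) [Ring T] [Algebra k T] :
    T ⊗[k] (T ⊗[k] (T ⊗[k] T)) →ₗ[k] T :=
  (LinearMap.mul' k T).comp
    (TensorProduct.map (LinearMap.id : T →ₗ[k] T) (mul₃ k T))

/-- The left hand side `h_{1'} ⊗ h_{2'1} ⊗ h_{2'2}` of the Hopf brace compatibility
condition (2.1), i.e. `(id ⊗ Δ) ∘ Δ'`. -/
def braceLHS (H : Type*) [Ring H] [Algebra k H] (Δ Δ' : H →ₗ[k] H ⊗[k] H) :
    H →ₗ[k] H ⊗[k] (H ⊗[k] H) :=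
  (TensorProduct.map (LinearMap.id : H →ₗ[k] H) Δ).comp Δ'

/-- The right hand side `h_{11'}S(h_2)h_{31'} ⊗ h_{12'} ⊗ h_{32'}` of the Hopf brace
compatibility condition (2.1):  it is obtained from the twofold comultiplication
`h ↦ h_1 ⊗ (h_2 ⊗ h_3)` (using `Δ`) by applying `Δ'` to the first and third legs,
`S` to the middle leg, placing the results in the appropriate tensor positions of
`H ⊗ (H ⊗ H)` (filled with `1`s) and multiplying. -/
def braceRHS (H : Type*) [Ring H] [Algebra k H] (Δ Δ' : H →ₗ[k] H ⊗[k] H)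
    (S : H →ₗ[k] H) : H →ₗ[k] H ⊗[k] (H ⊗[k] H) :=
  (mul₃ k (H ⊗[k] (H ⊗[k] H))).comp
    ((TensorProduct.map
        ((TensorProduct.map (LinearMap.id : H →ₗ[k] H) (ι₁ k H H)).comp Δ')
        (TensorProduct.map ((ι₁ k H (H ⊗[k] H)).comp S)
          ((TensorProduct.map (LinearMap.id : H →ₗ[k] H) (ι₂ k H H)).comp Δ'))).comp
      ((TensorProduct.map (LinearMap.id : H →ₗ[k] H) Δ).comp Δ))

/-- A Hopf brace on the `k`-algebra `H` : two Hopf algebra structures sharing the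
multiplication and unit of `H`, subject to the compatibility condition (2.1):
`h_{1'} ⊗ h_{2'1} ⊗ h_{2'2} = h_{11'}S(h_2)h_{31'} ⊗ h_{12'} ⊗ h_{32'}`. -/
structure HopfBrace (H : Type*) [Ring H] [Algebra k H] where
  fst : HopfStruct k H
  snd : HopfStruct k H
  compat : ∀ h : H,
    braceLHS k H fst.Δ snd.Δ h = braceRHS k H fst.Δ snd.Δ fst.S h

/-- The coaction `ρ(h) = S(h_1) h_{21'} ⊗ h_{22'}` of Lemma 2.5. -/
def ρmap (H : Type*) [Ring H] [Algebra k H] (Δ Δ' : H →ₗ[k] H ⊗[k] H)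
    (S : H →ₗ[k] H) : H →ₗ[k] H ⊗[k] H :=
  (LinearMap.mul' k (H ⊗[k] H)).comp
    ((TensorProduct.map ((ι₁ k H H).comp S) Δ').comp Δ)

/-- The coaction `φ(a) = (T(a_{1'}))_{(-1)} a_{2'} ⊗ (T(a_{1'}))_{(0)} a_{3'}`
of Lemma 2.8(2), where `x_{(-1)} ⊗ x_{(0)} = ρ(x)`. -/
def φmap (H : Type*) [Ring H] [Algebra k H] (Δ Δ' : H →ₗ[k] H ⊗[k] H)
    (S T : H →ₗ[k] H) : H →ₗ[k] H ⊗[k] H :=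
  (LinearMap.mul' k (H ⊗[k] H)).comp
    ((TensorProduct.map ((ρmap k H Δ Δ' S).comp T)
        (LinearMap.id : H ⊗[k] H →ₗ[k] H ⊗[k] H)).comp
      ((TensorProduct.map (LinearMap.id : H →ₗ[k] H) Δ').comp Δ'))

/-- `ρ : A →ₗ H ⊗ A` is a coassociative counital left coaction of the coalgebra
`(H, ΔH, εH)`. -/
def LeftCoaction (A H : Type*) [Ring A] [Algebra k A] [Ring H] [Algebra k H]
    (ΔH : H →ₗ[k] H ⊗[k] H) (εH : H →ₗ[k] k) (ρ : A →ₗ[k] H ⊗[k] A) : Prop :=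
  (∀ a : A,
    TensorProduct.map (LinearMap.id : H →ₗ[k] H) ρ (ρ a)
      = TensorProduct.assoc k H H A
          (TensorProduct.map ΔH (LinearMap.id : A →ₗ[k] A) (ρ a))) ∧
  (∀ a : A,
    TensorProduct.lid k A (TensorProduct.map εH (LinearMap.id : A →ₗ[k] A) (ρ a)) = a)

/-- `φ : H →ₗ H ⊗ A` is a coassociative counital right coaction of the coalgebra
`(A, ΔA, εA)`. -/
def RightCoaction (A H : Type*) [Ring A] [Algebra k A] [Ring H] [Algebra k H]
    (ΔA : A →ₗ[k] A ⊗[k] A) (εA : A →ₗ[k] k) (φ : H →ₗ[k] H ⊗[k] A) : Prop :=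
  (∀ h : H,
    TensorProduct.map (LinearMap.id : H →ₗ[k] H) ΔA (φ h)
      = TensorProduct.assoc k H A A
          (TensorProduct.map φ (LinearMap.id : A →ₗ[k] A) (φ h))) ∧
  (∀ h : H,
    TensorProduct.rid k H (TensorProduct.map (LinearMap.id : H →ₗ[k] H) εA (φ h)) = h)

/-- a linear map which is moreover multiplicative and unital. -/
def IsAlgebraMorphism (M N : Type*) [Ring M] [Algebra k M] [Ring N] [Algebra k N]
    (f : M →ₗ[k] N) : Prop :=
  (∀ a b : M, f (a * b) = f a * f b) ∧ f 1 = 1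

/-- `a ↦ a_{1(-1)} a_{2(-1)} ⊗ a_{1(0)} ⊗ a_{2(0)}`, the right hand side of the
comodule coalgebra condition. -/
def comodCoalgRHS (A H : Type*) [Ring A] [Algebra k A] [Ring H] [Algebra k H]
    (ΔA : A →ₗ[k] A ⊗[k] A) (ρ : A →ₗ[k] H ⊗[k] A) :
    A →ₗ[k] H ⊗[k] (A ⊗[k] A) :=
  (LinearMap.mul' k (H ⊗[k] (A ⊗[k] A))).comp
    ((TensorProduct.map
        ((TensorProduct.map (LinearMap.id : H →ₗ[k] H) (ι₁ k A A)).comp ρ)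
        ((TensorProduct.map (LinearMap.id : H →ₗ[k] H) (ι₂ k A A)).comp ρ)).comp ΔA)

/-- The two conditions making a left `H`-comodule `(A, ρ)` a comodule coalgebra:
`a_{(-1)} ⊗ Δ(a_{(0)}) = a_{1(-1)} a_{2(-1)} ⊗ a_{1(0)} ⊗ a_{2(0)}` and
`a_{(-1)} ε(a_{(0)}) = ε(a) 1`. -/
def IsComodCoalg (A H : Type*) [Ring A] [Algebra k A] [Ring H] [Algebra k H]
    (ΔA : A →ₗ[k] A ⊗[k] A) (εA : A →ₗ[k] k) (ρ : A →ₗ[k] H ⊗[k] A) : Prop :=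
  (∀ a : A,
    TensorProduct.map (LinearMap.id : H →ₗ[k] H) ΔA (ρ a)
      = comodCoalgRHS k A H ΔA ρ a) ∧
  (∀ a : A,
    TensorProduct.rid k H (TensorProduct.map (LinearMap.id : H →ₗ[k] H) εA (ρ a))
      = algebraMap k H (εA a))

/-- `a ↦ a_{1(-1)} a_{2(-1)[0]} ⊗ a_{1(0)} a_{2(-1)[1]} ⊗ a_{2(0)}`, the right hand
side of (HM2). -/
def HM2RHS (A H : Type*) [Ring A] [Algebra k A] [Ring H] [Algebra k H]
    (ΔA : A →ₗ[k] A ⊗[k] A) (ρ : A →ₗ[k] H ⊗[k] A) (φ : H →ₗ[k] H ⊗[k] A) :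
    A →ₗ[k] H ⊗[k] (A ⊗[k] A) :=
  (LinearMap.mul' k (H ⊗[k] (A ⊗[k] A))).comp
    ((TensorProduct.map
        ((TensorProduct.map (LinearMap.id : H →ₗ[k] H) (ι₁ k A A)).comp ρ)
        ((TensorProduct.assoc k H A A).toLinearMap.comp
          ((TensorProduct.map φ (LinearMap.id : A →ₗ[k] A)).comp ρ))).comp ΔA)

/-- `h ↦ h_{1[0]} ⊗ h_{1[1](-1)} h_{2[0]} ⊗ h_{1[1](0)} h_{2[1]}`, the right hand
side of (HM3). -/
def HM3RHS (A H : Type*) [Ring A] [Algebra k A] [Ring H] [Algebra k H]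
    (ΔH : H →ₗ[k] H ⊗[k] H) (ρ : A →ₗ[k] H ⊗[k] A) (φ : H →ₗ[k] H ⊗[k] A) :
    H →ₗ[k] H ⊗[k] (H ⊗[k] A) :=
  (LinearMap.mul' k (H ⊗[k] (H ⊗[k] A))).comp
    ((TensorProduct.map
        ((TensorProduct.map (LinearMap.id : H →ₗ[k] H) ρ).comp φ)
        ((ι₂ k H (H ⊗[k] A)).comp φ)).comp ΔH)

/-- A Hopf matched pair `(A, H)` (Definition 3.1): `ρ` makes `A` a left
`H`-comodule algebra, `φ` makes `H` a right `A`-comodule algebra, and the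
compatibility conditions (HM1)–(HM4) hold. -/
def IsHopfMatchedPair (A H : Type*) [Ring A] [Algebra k A] [Ring H] [Algebra k H]
    (ΔA : A →ₗ[k] A ⊗[k] A) (εA : A →ₗ[k] k)
    (ΔH : H →ₗ[k] H ⊗[k] H) (εH : H →ₗ[k] k)
    (ρ : A →ₗ[k] H ⊗[k] A) (φ : H →ₗ[k] H ⊗[k] A) : Prop :=
  LeftCoaction k A H ΔH εH ρ ∧
  IsAlgebraMorphism k A (H ⊗[k] A) ρ ∧
  RightCoaction k A H ΔA εA φ ∧
  IsAlgebraMorphism k H (H ⊗[k] A) φ ∧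
  -- (HM1)
  (∀ a : A,
    TensorProduct.rid k H (TensorProduct.map (LinearMap.id : H →ₗ[k] H) εA (ρ a))
      = algebraMap k H (εA a)) ∧
  (∀ h : H,
    TensorProduct.lid k A (TensorProduct.map εH (LinearMap.id : A →ₗ[k] A) (φ h))
      = algebraMap k A (εH h)) ∧
  -- (HM2)
  (∀ a : A,
    TensorProduct.map (LinearMap.id : H →ₗ[k] H) ΔA (ρ a) = HM2RHS k A H ΔA ρ φ a) ∧
  -- (HM3)
  (∀ h : H,
    TensorProduct.assoc k H H A
        (TensorProduct.map ΔH (LinearMap.id : A →ₗ[k] A) (φ h))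
      = HM3RHS k A H ΔH ρ φ h) ∧
  -- (HM4)
  (∀ (a : A) (h : H), φ h * ρ a = ρ a * φ h)

/-- Equation (3.2): `Δ(a) = a_{1'} T(a_{2'(-1)}) ⊗ a_{2'(0)}`. -/
def Δfromρ (A : Type*) [Ring A] [Algebra k A] (Δ' : A →ₗ[k] A ⊗[k] A)
    (T : A →ₗ[k] A) (ρ : A →ₗ[k] A ⊗[k] A) : A →ₗ[k] A ⊗[k] A :=
  (LinearMap.mul' k (A ⊗[k] A)).comp
    ((TensorProduct.map (ι₁ k A A)
        ((TensorProduct.map T (LinearMap.id : A →ₗ[k] A)).comp ρ)).comp Δ')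

/-- Equation (3.3): `S(a) = a_{(-1)} T(a_{(0)})`. -/
def Sfromρ (A : Type*) [Ring A] [Algebra k A] (T : A →ₗ[k] A)
    (ρ : A →ₗ[k] A ⊗[k] A) : A →ₗ[k] A :=
  (LinearMap.mul' k A).comp
    ((TensorProduct.map (LinearMap.id : A →ₗ[k] A) T).comp ρ)

/-- The comultiplication `Δ_R(h) = R · Δ(h) · R⁻¹` obtained by conjugating `Δ` with
an invertible element `R ∈ H ⊗ H`. -/
def conjComul (H : Type*) [Ring H] [Algebra k H] (R Rinv : H ⊗[k] H)
    (Δ : H →ₗ[k] H ⊗[k] H) : H →ₗ[k] H ⊗[k] H :=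
  (LinearMap.mulLeft k R).comp ((LinearMap.mulRight k Rinv).comp Δ)

/-- The braiding candidate `c(x ⊗ y) = x_{(-1)} y_{[0]} ⊗ x_{(0)} y_{[1]}` of
Proposition 2.9, i.e. `c = mult ∘ (ρ ⊗ φ)`. -/
def cmap (A : Type*) [Ring A] [Algebra k A] (Δ Δ' : A →ₗ[k] A ⊗[k] A)
    (S T : A →ₗ[k] A) : A ⊗[k] A →ₗ[k] A ⊗[k] A :=
  (LinearMap.mul' k (A ⊗[k] A)).comp
    (TensorProduct.map (ρmap k A Δ Δ' S) (φmap k A Δ Δ' S T))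

/-- `γ(x ⊗ y) = x y_{(-1)} ⊗ y_{(0)}` for a coaction `ρ(y) = y_{(-1)} ⊗ y_{(0)}`. -/
def γmap (A : Type*) [Ring A] [Algebra k A] (ρ : A →ₗ[k] A ⊗[k] A) :
    A ⊗[k] A →ₗ[k] A ⊗[k] A :=
  (LinearMap.mul' k (A ⊗[k] A)).comp (TensorProduct.map (ι₁ k A A) ρ)

/-- `σ(x ⊗ y) = y_2 ⊗ x S(y_1) y_3`. -/
def σmap (A : Type*) [Ring A] [Algebra k A] (Δ : A →ₗ[k] A ⊗[k] A)
    (S : A →ₗ[k] A) : A ⊗[k] A →ₗ[k] A ⊗[k] A :=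
  (mul₄ k (A ⊗[k] A)).comp
    ((TensorProduct.map (ι₂ k A A)
        (TensorProduct.map ((ι₂ k A A).comp S)
          (TensorProduct.map (ι₁ k A A) (ι₂ k A A)))).comp
      (TensorProduct.map (LinearMap.id : A →ₗ[k] A)
        ((TensorProduct.map (LinearMap.id : A →ₗ[k] A) Δ).comp Δ)))

/-- The usual tensor product comultiplication `Δ̂` on `A ⊗ H`:
`a ⊗ h ↦ (a_1 ⊗ h_1) ⊗ (a_2 ⊗ h_2)`. -/
def hatΔ (A H : Type*) [Ring A] [Algebra k A] [Ring H] [Algebra k H]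
    (ΔA : A →ₗ[k] A ⊗[k] A) (ΔH : H →ₗ[k] H ⊗[k] H) :
    A ⊗[k] H →ₗ[k] (A ⊗[k] H) ⊗[k] (A ⊗[k] H) :=
  (TensorProduct.tensorTensorTensorComm k A A H H).toLinearMap.comp
    (TensorProduct.map ΔA ΔH)

/-- The bicrossed coproduct comultiplication on `A ⊗ H`:
`Δ̃(a ⊗ h) = a_1 ⊗ a_{2(-1)} h_{1[0]} ⊗ a_{2(0)} h_{1[1]} ⊗ h_2`. -/
def bicrossΔ (A H : Type*) [Ring A] [Algebra k A] [Ring H] [Algebra k H]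
    (ΔA : A →ₗ[k] A ⊗[k] A) (ΔH : H →ₗ[k] H ⊗[k] H)
    (ρ : A →ₗ[k] H ⊗[k] A) (φ : H →ₗ[k] H ⊗[k] A) :
    A ⊗[k] H →ₗ[k] (A ⊗[k] H) ⊗[k] (A ⊗[k] H) :=
  (LinearMap.mul' k ((A ⊗[k] H) ⊗[k] (A ⊗[k] H))).comp
    (TensorProduct.map
      -- a ↦ (a_1 ⊗ a_{2(-1)}) ⊗ (a_{2(0)} ⊗ 1)
      ((TensorProduct.map (LinearMap.id : A ⊗[k] H →ₗ[k] A ⊗[k] H) (ι₁ k A H)).comp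
        ((TensorProduct.assoc k A H A).symm.toLinearMap.comp
          ((TensorProduct.map (LinearMap.id : A →ₗ[k] A) ρ).comp ΔA)))
      -- h ↦ (1 ⊗ h_{1[0]}) ⊗ (h_{1[1]} ⊗ h_2)
      ((TensorProduct.map (ι₂ k A H) (LinearMap.id : A ⊗[k] H →ₗ[k] A ⊗[k] H)).comp
        ((TensorProduct.assoc k H A H).toLinearMap.comp
          ((TensorProduct.map φ (LinearMap.id : H →ₗ[k] H)).comp ΔH))))

/-- The antipode of the bicrossed coproduct:
`S̃(a ⊗ h) = S_A(h_{[1]}) S_A(a_{(0)}) ⊗ S_H(h_{[0]}) S_H(a_{(-1)})`. -/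
def bicrossS (A H : Type*) [Ring A] [Algebra k A] [Ring H] [Algebra k H]
    (SA : A →ₗ[k] A) (SH : H →ₗ[k] H)
    (ρ : A →ₗ[k] H ⊗[k] A) (φ : H →ₗ[k] H ⊗[k] A) :
    A ⊗[k] H →ₗ[k] A ⊗[k] H :=
  (LinearMap.mul' k (A ⊗[k] H)).comp
    ((TensorProduct.map
        ((TensorProduct.map SA SH).comp ((TensorProduct.comm k H A).toLinearMap.comp φ))
        ((TensorProduct.map SA SH).comp ((TensorProduct.comm k H A).toLinearMap.comp ρ))).comp
      (TensorProduct.comm k A H).toLinearMap)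

/-- The left hand side `h_{[0]} ⊗ h_{[1]1} ⊗ h_{[1]2}` of equation (4.1), where the
`A`-leg is comultiplied with `Δ'`. -/
def eq41LHS (A H : Type*) [Ring A] [Algebra k A] [Ring H] [Algebra k H]
    (Δ'A : A →ₗ[k] A ⊗[k] A) (φ : H →ₗ[k] H ⊗[k] A) :
    H →ₗ[k] H ⊗[k] (A ⊗[k] A) :=
  (TensorProduct.map (LinearMap.id : H →ₗ[k] H) Δ'A).comp φ

/-- The right hand side `h_{1[0]} S(h_2) h_{3[0]} ⊗ h_{1[1]} ⊗ h_{3[1]}` of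
equation (4.1). -/
def eq41RHS (A H : Type*) [Ring A] [Algebra k A] [Ring H] [Algebra k H]
    (ΔH : H →ₗ[k] H ⊗[k] H) (SH : H →ₗ[k] H) (φ : H →ₗ[k] H ⊗[k] A) :
    H →ₗ[k] H ⊗[k] (A ⊗[k] A) :=
  (mul₃ k (H ⊗[k] (A ⊗[k] A))).comp
    ((TensorProduct.map
        ((TensorProduct.map (LinearMap.id : H →ₗ[k] H) (ι₁ k A A)).comp φ)
        (TensorProduct.map ((ι₁ k H (A ⊗[k] A)).comp SH)
          ((TensorProduct.map (LinearMap.id : H →ₗ[k] H) (ι₂ k A A)).comp φ))).comp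
      ((TensorProduct.map (LinearMap.id : H →ₗ[k] H) ΔH).comp ΔH))

/-- `x ↦ x_{11'} S(x_2) ⊗ x_{12'} ⊗ 1 ∈ H ⊗ (H ⊗ A)`, an auxiliary map for
equations (4.2) and (4.3). -/
def LHmap (A H : Type*) [Ring A] [Algebra k A] [Ring H] [Algebra k H]
    (ΔH Δ'H : H →ₗ[k] H ⊗[k] H) (SH : H →ₗ[k] H) :
    H →ₗ[k] H ⊗[k] (H ⊗[k] A) :=
  (LinearMap.mul' k (H ⊗[k] (H ⊗[k] A))).comp
    ((TensorProduct.map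
        ((TensorProduct.map (LinearMap.id : H →ₗ[k] H) (ι₁ k H A)).comp Δ'H)
        ((ι₁ k H (H ⊗[k] A)).comp SH)).comp ΔH)

/-- The right hand side
`a_{(-1)11'} S(a_{(-1)2}) a_{(0)(-1)'} ⊗ a_{(-1)12'} ⊗ a_{(0)(0)'}` of
equation (4.2). -/
def eq42RHS (A H : Type*) [Ring A] [Algebra k A] [Ring H] [Algebra k H]
    (ΔH Δ'H : H →ₗ[k] H ⊗[k] H) (SH : H →ₗ[k] H)
    (ρ ρ' : A →ₗ[k] H ⊗[k] A) :
    A →ₗ[k] H ⊗[k] (H ⊗[k] A) :=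
  (LinearMap.mul' k (H ⊗[k] (H ⊗[k] A))).comp
    ((TensorProduct.map (LHmap k A H ΔH Δ'H SH)
        ((TensorProduct.map (LinearMap.id : H →ₗ[k] H) (ι₂ k H A)).comp ρ')).comp ρ)

/-- The right hand side
`h_{1[0]11'} S(h_{1[0]2}) h_{1[1](-1)'} h_2 ⊗ h_{1[0]12'} ⊗ h_{1[1](0)'}` of
equation (4.3). -/
def eq43RHS (A H : Type*) [Ring A] [Algebra k A] [Ring H] [Algebra k H]
    (ΔH Δ'H : H →ₗ[k] H ⊗[k] H) (SH : H →ₗ[k] H)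
    (ρ' : A →ₗ[k] H ⊗[k] A) (φ : H →ₗ[k] H ⊗[k] A) :
    H →ₗ[k] H ⊗[k] (H ⊗[k] A) :=
  (LinearMap.mul' k (H ⊗[k] (H ⊗[k] A))).comp
    ((TensorProduct.map
        ((LinearMap.mul' k (H ⊗[k] (H ⊗[k] A))).comp
          ((TensorProduct.map (LHmap k A H ΔH Δ'H SH)
              ((TensorProduct.map (LinearMap.id : H →ₗ[k] H) (ι₂ k H A)).comp ρ')).comp φ))
        (ι₁ k H (H ⊗[k] A))).comp ΔH)


section Helpers
variable {k : Type*} [Field k]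
variable {A B C : Type*} [Ring A] [Algebra k A] [Ring B] [Algebra k B] [Ring C] [Algebra k C]
variable {M N : Type*} [AddCommGroup M] [Module k M] [AddCommGroup N] [Module k N]

lemma mul_tmul'' (a : A) (b : B) (t : A ⊗[k] B) :
    (a ⊗ₜ[k] b) * t = map (LinearMap.mulLeft k a) (LinearMap.mulLeft k b) t := by
  induction t using TensorProduct.induction_on with
  | zero => simp
  | tmul x y => simp [Algebra.TensorProduct.tmul_mul_tmul]
  | add x y hx hy => simp [mul_add, hx, hy]

lemma tmul_mul'' (a : A) (b : B) (t : A ⊗[k] B) :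
    t * (a ⊗ₜ[k] b) = map (LinearMap.mulRight k a) (LinearMap.mulRight k b) t := by
  induction t using TensorProduct.induction_on with
  | zero => simp
  | tmul x y => simp [Algebra.TensorProduct.tmul_mul_tmul]
  | add x y hx hy => simp [add_mul, hx, hy]

lemma mul'_map_left (c : A) (f : M →ₗ[k] A) (g : N →ₗ[k] A) (t : M ⊗[k] N) :
    LinearMap.mul' k A (map (LinearMap.mulLeft k c ∘ₗ f) g t)
      = c * LinearMap.mul' k A (map f g t) := by
  induction t using TensorProduct.induction_on with
  | zero => simp
  | tmul x y => simp [mul_assoc]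
  | add x y hx hy => simp [mul_add, hx, hy]

lemma mul'_map_right (c : A) (f : M →ₗ[k] A) (g : N →ₗ[k] A) (t : M ⊗[k] N) :
    LinearMap.mul' k A (map f (LinearMap.mulRight k c ∘ₗ g) t)
      = LinearMap.mul' k A (map f g t) * c := by
  induction t using TensorProduct.induction_on with
  | zero => simp
  | tmul x y => simp [mul_assoc]
  | add x y hx hy => simp [add_mul, hx, hy]

lemma mul'_map_mid (c : A) (f : M →ₗ[k] A) (g : N →ₗ[k] A) (t : M ⊗[k] N) :
    LinearMap.mul' k A (map f (LinearMap.mulLeft k c ∘ₗ g) t)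
      = LinearMap.mul' k A (map (LinearMap.mulRight k c ∘ₗ f) g t) := by
  induction t using TensorProduct.induction_on with
  | zero => simp
  | tmul x y => simp [mul_assoc]
  | add x y hx hy => simp [hx, hy]

lemma mul'_map_mid_left (c : A) (f : M →ₗ[k] A) (g : N →ₗ[k] A)
    (hc : ∀ x : M, c * f x = f x * c) (t : M ⊗[k] N) :
    LinearMap.mul' k A (map f (LinearMap.mulLeft k c ∘ₗ g) t)
      = c * LinearMap.mul' k A (map f g t) := by
  rw [mul'_map_mid]
  have : map (LinearMap.mulRight k c ∘ₗ f) g t = map (LinearMap.mulLeft k c ∘ₗ f) g t := by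
    congr 1; ext x; simp [hc x]
  rw [this, mul'_map_left]

lemma mul'_map_fst_right (c : A) (f : M →ₗ[k] A) (g : N →ₗ[k] A)
    (hc : ∀ y : N, c * g y = g y * c) (t : M ⊗[k] N) :
    LinearMap.mul' k A (map (LinearMap.mulRight k c ∘ₗ f) g t)
      = LinearMap.mul' k A (map f g t) * c := by
  induction t using TensorProduct.induction_on with
  | zero => simp
  | tmul x y => simp [mul_assoc, hc y]
  | add x y hx hy => simp [add_mul, hx, hy]

lemma linearMap_mul_of_tmul (f : A ⊗[k] B →ₗ[k] C)
    (hf : ∀ a b a' b', f ((a ⊗ₜ[k] b) * (a' ⊗ₜ[k] b')) = f (a ⊗ₜ[k] b) * f (a' ⊗ₜ[k] b'))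
    (x y : A ⊗[k] B) : f (x * y) = f x * f y := by
  induction x using TensorProduct.induction_on with
  | zero => simp
  | add x₁ x₂ h1 h2 => simp [add_mul, h1, h2]
  | tmul a b =>
    induction y using TensorProduct.induction_on with
    | zero => simp
    | add y₁ y₂ h1 h2 => simp [mul_add, h1, h2]
    | tmul a' b' => exact hf a b a' b'

lemma map_map_mul {A' B' : Type*} [Ring A'] [Algebra k A'] [Ring B'] [Algebra k B']
    (f : A →ₗ[k] A') (g : B →ₗ[k] B')
    (hf : ∀ x y, f (x * y) = f x * f y) (hg : ∀ x y, g (x * y) = g x * g y)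
    (x y : A ⊗[k] B) : map f g (x * y) = map f g x * map f g y :=
  linearMap_mul_of_tmul _ (by
    intro a b a' b'
    simp [Algebra.TensorProduct.tmul_mul_tmul, hf, hg]) x y

lemma map_map_one {A' B' : Type*} [Ring A'] [Algebra k A'] [Ring B'] [Algebra k B']
    (f : A →ₗ[k] A') (g : B →ₗ[k] B') (hf : f 1 = 1) (hg : g 1 = 1) :
    map f g (1 : A ⊗[k] B) = 1 := by
  rw [Algebra.TensorProduct.one_def, map_tmul, hf, hg, ← Algebra.TensorProduct.one_def]

lemma assoc_eq_alg (x : (A ⊗[k] B) ⊗[k] C) :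
    TensorProduct.assoc k A B C x = Algebra.TensorProduct.assoc k k k A B C x := by
  induction x using TensorProduct.induction_on with
  | zero => rw [LinearEquiv.map_zero, map_zero]
  | add x y hx hy => rw [LinearEquiv.map_add, map_add, hx, hy]
  | tmul t c =>
    induction t using TensorProduct.induction_on with
    | zero => rw [zero_tmul, LinearEquiv.map_zero, map_zero]
    | add p q hp hq =>
        rw [add_tmul, LinearEquiv.map_add, map_add, hp, hq]
    | tmul a b => rw [assoc_tmul, Algebra.TensorProduct.assoc_tmul]

lemma assoc_mul (x y : (A ⊗[k] B) ⊗[k] C) :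
    TensorProduct.assoc k A B C (x * y)
      = TensorProduct.assoc k A B C x * TensorProduct.assoc k A B C y := by
  rw [assoc_eq_alg, assoc_eq_alg, assoc_eq_alg, map_mul]

lemma assoc_tmul_right {P : Type*} [AddCommGroup P] [Module k P] (t : M ⊗[k] N) (c : P) :
    TensorProduct.assoc k M N P (t ⊗ₜ[k] c)
      = map LinearMap.id ((mk k N P).flip c) t := by
  induction t using TensorProduct.induction_on with
  | zero => simp
  | tmul a b => simp
  | add x y hx hy => simp [add_tmul, hx, hy]

end Helpers
section Conv
variable {k : Type*} [Field k]
variable {C : Type*} [AddCommGroup C] [Module k C]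
variable {H : Type*} [Ring H] [Algebra k H]
variable (Δc : C →ₗ[k] C ⊗[k] C) (εc : C →ₗ[k] k)

/-- convolution product on `Hom(C, H)`. -/
def conv (f g : C →ₗ[k] H) : C →ₗ[k] H :=
  LinearMap.mul' k H ∘ₗ map f g ∘ₗ Δc

lemma conv_apply (f g : C →ₗ[k] H) (c : C) :
    conv Δc f g c = LinearMap.mul' k H (map f g (Δc c)) := rfl

lemma conv_assoc
    (hco : ∀ c : C, map LinearMap.id Δc (Δc c)
      = TensorProduct.assoc k C C C (map Δc LinearMap.id (Δc c)))
    (f g h : C →ₗ[k] H) (c : C) :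
    conv Δc (conv Δc f g) h c = conv Δc f (conv Δc g h) c := by
  have key : ∀ u : C ⊗[k] (C ⊗[k] C),
      LinearMap.mul' k H (map (LinearMap.mul' k H ∘ₗ map f g) h
        ((TensorProduct.assoc k C C C).symm u))
      = LinearMap.mul' k H (map f (LinearMap.mul' k H ∘ₗ map g h) u) := by
    intro u
    induction u using TensorProduct.induction_on with
    | zero => simp
    | add x y hx hy => simp [hx, hy]
    | tmul x t =>
      induction t using TensorProduct.induction_on with
      | zero => simp
      | add p q hp hq => simp [tmul_add, hp, hq]
      | tmul y z => simp [mul_assoc]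
  have h1 : map Δc LinearMap.id (Δc c)
      = (TensorProduct.assoc k C C C).symm (map LinearMap.id Δc (Δc c)) := by
    rw [hco c, LinearEquiv.symm_apply_apply]
  calc conv Δc (conv Δc f g) h c
      = LinearMap.mul' k H (map (LinearMap.mul' k H ∘ₗ map f g) h
          (map Δc LinearMap.id (Δc c))) := by
        rw [conv_apply]
        congr 1
        rw [← LinearMap.comp_apply (map (LinearMap.mul' k H ∘ₗ map f g) h), ← map_comp,
          LinearMap.comp_id]
        rfl
    _ = LinearMap.mul' k H (map f (LinearMap.mul' k H ∘ₗ map g h) (map LinearMap.id Δc (Δc c))) := by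
        rw [h1]; exact key _
    _ = conv Δc f (conv Δc g h) c := by
        rw [conv_apply]
        congr 1
        rw [← LinearMap.comp_apply (map f (LinearMap.mul' k H ∘ₗ map g h)), ← map_comp,
          LinearMap.comp_id]
        rfl

lemma conv_unit_left
    (hcl : ∀ c : C, TensorProduct.lid k C (map εc LinearMap.id (Δc c)) = c)
    (f : C →ₗ[k] H) (c : C) :
    conv Δc (Algebra.linearMap k H ∘ₗ εc) f c = f c := by
  have key : ∀ t : C ⊗[k] C,
      LinearMap.mul' k H (map (Algebra.linearMap k H ∘ₗ εc) f t)
        = f (TensorProduct.lid k C (map εc LinearMap.id t)) := by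
    intro t
    induction t using TensorProduct.induction_on with
    | zero => simp
    | add x y hx hy => simp [hx, hy]
    | tmul x y => simp [Algebra.smul_def]
  rw [conv_apply, key, hcl]

lemma conv_unit_right
    (hcr : ∀ c : C, TensorProduct.rid k C (map LinearMap.id εc (Δc c)) = c)
    (f : C →ₗ[k] H) (c : C) :
    conv Δc f (Algebra.linearMap k H ∘ₗ εc) c = f c := by
  have key : ∀ t : C ⊗[k] C,
      LinearMap.mul' k H (map f (Algebra.linearMap k H ∘ₗ εc) t)
        = f (TensorProduct.rid k C (map LinearMap.id εc t)) := by
    intro t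
    induction t using TensorProduct.induction_on with
    | zero => simp
    | add x y hx hy => simp [hx, hy]
    | tmul x y => simp [Algebra.smul_def, Algebra.commutes]
  rw [conv_apply, key, hcr]

lemma conv_unique
    (hco : ∀ c : C, map LinearMap.id Δc (Δc c)
      = TensorProduct.assoc k C C C (map Δc LinearMap.id (Δc c)))
    (hcl : ∀ c : C, TensorProduct.lid k C (map εc LinearMap.id (Δc c)) = c)
    (hcr : ∀ c : C, TensorProduct.rid k C (map LinearMap.id εc (Δc c)) = c)
    (f a b : C →ₗ[k] H)
    (ha : ∀ c, conv Δc a f c = algebraMap k H (εc c))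
    (hb : ∀ c, conv Δc f b c = algebraMap k H (εc c)) : a = b := by
  have ha' : conv Δc a f = Algebra.linearMap k H ∘ₗ εc := by
    ext c; simpa using ha c
  have hb' : conv Δc f b = Algebra.linearMap k H ∘ₗ εc := by
    ext c; simpa using hb c
  ext c
  calc a c = conv Δc a (Algebra.linearMap k H ∘ₗ εc) c := (conv_unit_right Δc εc hcr a c).symm
    _ = conv Δc a (conv Δc f b) c := by rw [hb']
    _ = conv Δc (conv Δc a f) b c := (conv_assoc Δc hco a f b c).symm
    _ = conv Δc (Algebra.linearMap k H ∘ₗ εc) b c := by rw [ha']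
    _ = b c := conv_unit_left Δc εc hcl b c

end Conv
section Anti
variable {k : Type*} [Field k] {H : Type*} [Ring H] [Algebra k H] (hs : HopfStruct k H)

/-- tensor-product comultiplication on `H ⊗ H`. -/
def Δ2 : H ⊗[k] H →ₗ[k] (H ⊗[k] H) ⊗[k] (H ⊗[k] H) :=
  (TensorProduct.tensorTensorTensorComm k H H H H).toLinearMap ∘ₗ map hs.Δ hs.Δ

/-- tensor-product counit on `H ⊗ H`. -/
def ε2 : H ⊗[k] H →ₗ[k] k := LinearMap.mul' k k ∘ₗ map hs.ε hs.ε

lemma Δ2_tmul (a b : H) :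
    Δ2 hs (a ⊗ₜ[k] b)
      = TensorProduct.tensorTensorTensorComm k H H H H (hs.Δ a ⊗ₜ[k] hs.Δ b) := rfl

lemma ε2_tmul (a b : H) : ε2 hs (a ⊗ₜ[k] b) = hs.ε a * hs.ε b := rfl

/-- reshuffle `(H⊗(H⊗H))⊗(H⊗(H⊗H)) → (H⊗H)⊗((H⊗H)⊗(H⊗H))`. -/
def resh : (H ⊗[k] (H ⊗[k] H)) ⊗[k] (H ⊗[k] (H ⊗[k] H)) →ₗ[k]
    (H ⊗[k] H) ⊗[k] ((H ⊗[k] H) ⊗[k] (H ⊗[k] H)) :=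
  (map LinearMap.id (TensorProduct.tensorTensorTensorComm k H H H H).toLinearMap) ∘ₗ
    (TensorProduct.tensorTensorTensorComm k H (H ⊗[k] H) H (H ⊗[k] H)).toLinearMap

lemma resh_claim0 (x y : H) (p q : H ⊗[k] H) :
    (x ⊗ₜ[k] y) ⊗ₜ[k] (TensorProduct.tensorTensorTensorComm k H H H H (p ⊗ₜ[k] q))
      = resh ((x ⊗ₜ[k] p) ⊗ₜ[k] (y ⊗ₜ[k] q)) := by
  induction p using TensorProduct.induction_on with
  | zero =>
      simp only [zero_tmul, tmul_zero, LinearEquiv.map_zero, LinearMap.map_zero]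
  | add p₁ p₂ h1 h2 =>
      simp only [add_tmul, tmul_add, LinearEquiv.map_add, LinearMap.map_add, h1, h2]
  | tmul a b =>
    induction q using TensorProduct.induction_on with
    | zero =>
        simp only [zero_tmul, tmul_zero, LinearEquiv.map_zero, LinearMap.map_zero]
    | add q₁ q₂ h1 h2 =>
        simp only [add_tmul, tmul_add, LinearEquiv.map_add, LinearMap.map_add, h1, h2]
    | tmul c d => simp [resh]

lemma coassoc2 (s : H ⊗[k] H) :
    map LinearMap.id (Δ2 hs) (Δ2 hs s)
      = TensorProduct.assoc k (H ⊗[k] H) (H ⊗[k] H) (H ⊗[k] H)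
          (map (Δ2 hs) LinearMap.id (Δ2 hs s)) := by
  have claim1 : ∀ t s : H ⊗[k] H,
      map LinearMap.id (Δ2 hs) (TensorProduct.tensorTensorTensorComm k H H H H (t ⊗ₜ[k] s))
        = resh ((map LinearMap.id hs.Δ t) ⊗ₜ[k] (map LinearMap.id hs.Δ s)) := by
    intro t s
    induction t using TensorProduct.induction_on with
    | zero =>
        simp only [zero_tmul, tmul_zero, LinearEquiv.map_zero, LinearMap.map_zero]
    | add t₁ t₂ h1 h2 =>
        simp only [add_tmul, tmul_add, LinearEquiv.map_add, LinearMap.map_add, h1, h2]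
    | tmul a₁ a₂ =>
      induction s using TensorProduct.induction_on with
      | zero =>
          simp only [zero_tmul, tmul_zero, LinearEquiv.map_zero, LinearMap.map_zero]
      | add s₁ s₂ h1 h2 =>
          simp only [add_tmul, tmul_add, LinearEquiv.map_add, LinearMap.map_add, h1, h2]
      | tmul b₁ b₂ =>
          simp only [tensorTensorTensorComm_tmul, map_tmul, LinearMap.id_coe, id_eq]
          rw [Δ2_tmul, resh_claim0]
  have claim2 : ∀ t s : H ⊗[k] H,
      TensorProduct.assoc k (H ⊗[k] H) (H ⊗[k] H) (H ⊗[k] H)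
          (map (Δ2 hs) LinearMap.id (TensorProduct.tensorTensorTensorComm k H H H H (t ⊗ₜ[k] s)))
        = resh ((TensorProduct.assoc k H H H (map hs.Δ LinearMap.id t))
            ⊗ₜ[k] (TensorProduct.assoc k H H H (map hs.Δ LinearMap.id s))) := by
    have claim0 : ∀ (x y : H) (p q : H ⊗[k] H),
        TensorProduct.assoc k (H ⊗[k] H) (H ⊗[k] H) (H ⊗[k] H)
            ((TensorProduct.tensorTensorTensorComm k H H H H (p ⊗ₜ[k] q)) ⊗ₜ[k] (x ⊗ₜ[k] y))
          = resh ((TensorProduct.assoc k H H H (p ⊗ₜ[k] x))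
              ⊗ₜ[k] (TensorProduct.assoc k H H H (q ⊗ₜ[k] y))) := by
      intro x y p q
      induction p using TensorProduct.induction_on with
      | zero =>
          simp only [zero_tmul, tmul_zero, LinearEquiv.map_zero, LinearMap.map_zero]
      | add p₁ p₂ h1 h2 =>
          simp only [add_tmul, tmul_add, LinearEquiv.map_add, LinearMap.map_add, h1, h2]
      | tmul a b =>
        induction q using TensorProduct.induction_on with
        | zero =>
            simp only [zero_tmul, tmul_zero, LinearEquiv.map_zero, LinearMap.map_zero]
        | add q₁ q₂ h1 h2 =>
            simp only [add_tmul, tmul_add, LinearEquiv.map_add, LinearMap.map_add, h1, h2]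
        | tmul c d => simp [resh]
    intro t s
    induction t using TensorProduct.induction_on with
    | zero =>
        simp only [zero_tmul, tmul_zero, LinearEquiv.map_zero, LinearMap.map_zero]
    | add t₁ t₂ h1 h2 =>
        simp only [add_tmul, tmul_add, LinearEquiv.map_add, LinearMap.map_add, h1, h2]
    | tmul a₁ a₂ =>
      induction s using TensorProduct.induction_on with
      | zero =>
          simp only [zero_tmul, tmul_zero, LinearEquiv.map_zero, LinearMap.map_zero]
      | add s₁ s₂ h1 h2 =>
          simp only [add_tmul, tmul_add, LinearEquiv.map_add, LinearMap.map_add, h1, h2]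
      | tmul b₁ b₂ =>
          simp only [tensorTensorTensorComm_tmul, map_tmul, LinearMap.id_coe, id_eq]
          rw [Δ2_tmul, claim0]
  induction s using TensorProduct.induction_on with
  | zero => simp only [LinearMap.map_zero, LinearEquiv.map_zero]
  | add s₁ s₂ h1 h2 => simp only [LinearMap.map_add, LinearEquiv.map_add, h1, h2]
  | tmul a b =>
      rw [Δ2_tmul, claim1, hs.coassoc a, hs.coassoc b, ← claim2]

lemma counit2_left (s : H ⊗[k] H) :
    TensorProduct.lid k (H ⊗[k] H) (map (ε2 hs) LinearMap.id (Δ2 hs s)) = s := by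
  have claim : ∀ t s : H ⊗[k] H,
      TensorProduct.lid k (H ⊗[k] H)
          (map (ε2 hs) LinearMap.id (TensorProduct.tensorTensorTensorComm k H H H H (t ⊗ₜ[k] s)))
        = (TensorProduct.lid k H (map hs.ε LinearMap.id t))
            ⊗ₜ[k] (TensorProduct.lid k H (map hs.ε LinearMap.id s)) := by
    intro t s
    induction t using TensorProduct.induction_on with
    | zero =>
        simp only [zero_tmul, tmul_zero, LinearEquiv.map_zero, LinearMap.map_zero]
    | add t₁ t₂ h1 h2 =>
        simp only [add_tmul, tmul_add, LinearEquiv.map_add, LinearMap.map_add, h1, h2]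
    | tmul a₁ a₂ =>
      induction s using TensorProduct.induction_on with
      | zero =>
          simp only [zero_tmul, tmul_zero, LinearEquiv.map_zero, LinearMap.map_zero]
      | add s₁ s₂ h1 h2 =>
          simp only [add_tmul, tmul_add, LinearEquiv.map_add, LinearMap.map_add, h1, h2]
      | tmul b₁ b₂ =>
          simp only [tensorTensorTensorComm_tmul, map_tmul, LinearMap.id_coe, id_eq,
            lid_tmul, ε2_tmul]
          rw [smul_tmul', tmul_smul, mul_smul, smul_tmul', smul_comm]
  induction s using TensorProduct.induction_on with
  | zero => simp only [LinearMap.map_zero, LinearEquiv.map_zero]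
  | add s₁ s₂ h1 h2 => simp only [LinearMap.map_add, LinearEquiv.map_add, h1, h2]
  | tmul a b => rw [Δ2_tmul, claim, hs.counit_left a, hs.counit_left b]

lemma counit2_right (s : H ⊗[k] H) :
    TensorProduct.rid k (H ⊗[k] H) (map LinearMap.id (ε2 hs) (Δ2 hs s)) = s := by
  have claim : ∀ t s : H ⊗[k] H,
      TensorProduct.rid k (H ⊗[k] H)
          (map LinearMap.id (ε2 hs) (TensorProduct.tensorTensorTensorComm k H H H H (t ⊗ₜ[k] s)))
        = (TensorProduct.rid k H (map LinearMap.id hs.ε t))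
            ⊗ₜ[k] (TensorProduct.rid k H (map LinearMap.id hs.ε s)) := by
    intro t s
    induction t using TensorProduct.induction_on with
    | zero =>
        simp only [zero_tmul, tmul_zero, LinearEquiv.map_zero, LinearMap.map_zero]
    | add t₁ t₂ h1 h2 =>
        simp only [add_tmul, tmul_add, LinearEquiv.map_add, LinearMap.map_add, h1, h2]
    | tmul a₁ a₂ =>
      induction s using TensorProduct.induction_on with
      | zero =>
          simp only [zero_tmul, tmul_zero, LinearEquiv.map_zero, LinearMap.map_zero]
      | add s₁ s₂ h1 h2 =>
          simp only [add_tmul, tmul_add, LinearEquiv.map_add, LinearMap.map_add, h1, h2]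
      | tmul b₁ b₂ =>
          simp only [tensorTensorTensorComm_tmul, map_tmul, LinearMap.id_coe, id_eq,
            rid_tmul, ε2_tmul]
          rw [smul_tmul', tmul_smul, mul_smul, smul_tmul', smul_comm]
  induction s using TensorProduct.induction_on with
  | zero => simp only [LinearMap.map_zero, LinearEquiv.map_zero]
  | add s₁ s₂ h1 h2 => simp only [LinearMap.map_add, LinearEquiv.map_add, h1, h2]
  | tmul a b => rw [Δ2_tmul, claim, hs.counit_right a, hs.counit_right b]

end Anti



section Anti2
variable {k : Type*} [Field k] {H : Type*} [Ring H] [Algebra k H] (hs : HopfStruct k H)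

lemma S_one : hs.S 1 = 1 := by
  have h := hs.antipode_left 1
  rw [hs.comul_one, hs.counit_one] at h
  rw [Algebra.TensorProduct.one_def] at h
  simp only [map_tmul, LinearMap.id_coe, id_eq, LinearMap.mul'_apply, mul_one,
    map_one] at h
  exact h

/-- the "opposite antipode candidate". -/
def νmap : H ⊗[k] H →ₗ[k] H :=
  LinearMap.mul' k H ∘ₗ map hs.S hs.S ∘ₗ (TensorProduct.comm k H H).toLinearMap

lemma S_anti_map : hs.S ∘ₗ LinearMap.mul' k H = νmap hs := by
  have keyA : ∀ t s : H ⊗[k] H,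
      LinearMap.mul' k H (map (hs.S ∘ₗ LinearMap.mul' k H) (LinearMap.mul' k H)
        (TensorProduct.tensorTensorTensorComm k H H H H (t ⊗ₜ[k] s)))
      = LinearMap.mul' k H (map hs.S LinearMap.id (t * s)) := by
    intro t s
    induction t using TensorProduct.induction_on with
    | zero => simp only [zero_tmul, zero_mul, LinearEquiv.map_zero, LinearMap.map_zero]
    | add t₁ t₂ h1 h2 =>
        simp only [add_tmul, add_mul, LinearEquiv.map_add, LinearMap.map_add, h1, h2]
    | tmul a₁ a₂ =>
      induction s using TensorProduct.induction_on with
      | zero => simp only [tmul_zero, mul_zero, LinearEquiv.map_zero, LinearMap.map_zero]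
      | add s₁ s₂ h1 h2 =>
          simp only [tmul_add, mul_add, LinearEquiv.map_add, LinearMap.map_add, h1, h2]
      | tmul b₁ b₂ =>
          simp only [tensorTensorTensorComm_tmul, map_tmul, LinearMap.coe_comp,
            Function.comp_apply, LinearMap.mul'_apply, LinearMap.id_coe, id_eq,
            Algebra.TensorProduct.tmul_mul_tmul]
  have ha : ∀ c : H ⊗[k] H,
      conv (Δ2 hs) (hs.S ∘ₗ LinearMap.mul' k H) (LinearMap.mul' k H) c
        = algebraMap k H (ε2 hs c) := by
    intro c
    induction c using TensorProduct.induction_on with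
    | zero => simp only [LinearMap.map_zero, map_zero]
    | add x y hx hy => simp only [LinearMap.map_add, map_add, hx, hy]
    | tmul a b =>
        rw [conv_apply, Δ2_tmul, keyA, ← hs.comul_mul, hs.antipode_left,
          hs.counit_mul, ε2_tmul]
  have keyB : ∀ t s : H ⊗[k] H,
      LinearMap.mul' k H (map (LinearMap.mul' k H) (νmap hs)
        (TensorProduct.tensorTensorTensorComm k H H H H (t ⊗ₜ[k] s)))
      = LinearMap.mul' k H
          (map (LinearMap.mulRight k (LinearMap.mul' k H (map LinearMap.id hs.S s)))
            hs.S t) := by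
    intro t s
    induction t using TensorProduct.induction_on with
    | zero => simp only [zero_tmul, LinearEquiv.map_zero, LinearMap.map_zero]
    | add t₁ t₂ h1 h2 =>
        simp only [add_tmul, LinearEquiv.map_add, LinearMap.map_add, h1, h2]
    | tmul a₁ a₂ =>
      induction s using TensorProduct.induction_on with
      | zero =>
          simp only [tmul_zero, LinearEquiv.map_zero, LinearMap.map_zero, map_tmul,
            LinearMap.mulRight_apply, LinearMap.mul'_apply, mul_zero, zero_mul]
      | add s₁ s₂ h1 h2 =>
          simp only [tmul_add, LinearEquiv.map_add, LinearMap.map_add, h1, h2,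
            map_tmul, LinearMap.mulRight_apply, LinearMap.mul'_apply, mul_add, add_mul]
      | tmul b₁ b₂ =>
          simp only [tensorTensorTensorComm_tmul, map_tmul, νmap, LinearMap.coe_comp,
            Function.comp_apply, LinearEquiv.coe_coe, comm_tmul, LinearMap.mul'_apply,
            LinearMap.mulRight_apply, LinearMap.id_coe, id_eq, mul_assoc]
  have hb : ∀ c : H ⊗[k] H,
      conv (Δ2 hs) (LinearMap.mul' k H) (νmap hs) c = algebraMap k H (ε2 hs c) := by
    intro c
    induction c using TensorProduct.induction_on with
    | zero => simp only [LinearMap.map_zero, map_zero]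
    | add x y hx hy => simp only [LinearMap.map_add, map_add, hx, hy]
    | tmul a b =>
        rw [conv_apply, Δ2_tmul, keyB, hs.antipode_right]
        have hmr : LinearMap.mulRight k (algebraMap k H (hs.ε b))
            = hs.ε b • (LinearMap.id : H →ₗ[k] H) := by
          ext x
          simp [Algebra.commutes, Algebra.smul_def]
        rw [hmr, ε2_tmul]
        have : map (hs.ε b • (LinearMap.id : H →ₗ[k] H)) hs.S (hs.Δ a)
            = hs.ε b • map LinearMap.id hs.S (hs.Δ a) := by
          rw [TensorProduct.map_smul_left]
          simp
        rw [this, LinearMap.map_smul, hs.antipode_right, Algebra.smul_def,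
          ← map_mul, mul_comm (hs.ε b) (hs.ε a)]
  exact conv_unique (Δ2 hs) (ε2 hs) (coassoc2 hs) (counit2_left hs) (counit2_right hs)
    (LinearMap.mul' k H) _ _ ha hb

lemma S_anti (x y : H) : hs.S (x * y) = hs.S y * hs.S x := by
  have h := congrArg (fun f : H ⊗[k] H →ₗ[k] H => f (x ⊗ₜ[k] y)) (S_anti_map hs)
  simpa [νmap] using h

end Anti2


section Main
variable {k : Type*} [Field k] {H : Type*} [Ring H] [Algebra k H]

lemma ι₁_apply {M N : Type*} [Ring M] [Algebra k M] [Ring N] [Algebra k N] (x : M) :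
    ι₁ k M N x = x ⊗ₜ[k] (1 : N) := rfl

lemma ι₂_apply {M N : Type*} [Ring M] [Algebra k M] [Ring N] [Algebra k N] (x : N) :
    ι₂ k M N x = (1 : M) ⊗ₜ[k] x := rfl

lemma conjComul_apply (R P : H ⊗[k] H) (Δ : H →ₗ[k] H ⊗[k] H) (h : H) :
    conjComul k H R P Δ h = R * (Δ h * P) := rfl

/-- normal form of condition (LC1). -/
lemma lc1_maps {R : H ⊗[k] H}
    (h1 : ∀ x : H, R * (x ⊗ₜ[k] (1 : H)) = (x ⊗ₜ[k] (1 : H)) * R) (x : H) :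
    map (LinearMap.mulRight k x) LinearMap.id R
      = map (LinearMap.mulLeft k x) LinearMap.id R := by
  have h := h1 x
  rwa [tmul_mul'', mul_tmul'', LinearMap.mulRight_one, LinearMap.mulLeft_one] at h

lemma lc1_push {R : H ⊗[k] H}
    (h1 : ∀ x : H, R * (x ⊗ₜ[k] (1 : H)) = (x ⊗ₜ[k] (1 : H)) * R) (x : H)
    {M N : Type*} [AddCommGroup M] [Module k M] [AddCommGroup N] [Module k N]
    (σ : H →ₗ[k] M) (ψ : H →ₗ[k] N) :
    map (σ ∘ₗ LinearMap.mulRight k x) ψ R = map (σ ∘ₗ LinearMap.mulLeft k x) ψ R := by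
  have h := congrArg (map σ ψ) (lc1_maps h1 x)
  rw [← LinearMap.comp_apply, ← LinearMap.comp_apply, ← map_comp, ← map_comp,
    LinearMap.comp_id] at h
  exact h

lemma lc1_push' {R : H ⊗[k] H}
    (h1 : ∀ x : H, R * (x ⊗ₜ[k] (1 : H)) = (x ⊗ₜ[k] (1 : H)) * R) (x : H)
    {N : Type*} [AddCommGroup N] [Module k N] (ψ : H →ₗ[k] N) :
    map (LinearMap.mulRight k x) ψ R = map (LinearMap.mulLeft k x) ψ R := by
  have h := lc1_push h1 x (LinearMap.id (M := H)) ψ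
  rwa [LinearMap.id_comp, LinearMap.id_comp] at h

/-- the inverse of an `R` satisfying (LC1) satisfies (LC1). -/
lemma lc1_inv {R P : H ⊗[k] H} (hRP : R * P = 1) (hPR : P * R = 1)
    (h1 : ∀ x : H, R * (x ⊗ₜ[k] (1 : H)) = (x ⊗ₜ[k] (1 : H)) * R) (x : H) :
    P * (x ⊗ₜ[k] (1 : H)) = (x ⊗ₜ[k] (1 : H)) * P := by
  calc P * (x ⊗ₜ[k] (1 : H)) = P * (x ⊗ₜ[k] (1 : H)) * (R * P) := by rw [hRP, mul_one]
    _ = P * ((x ⊗ₜ[k] (1 : H)) * R) * P := by rw [← mul_assoc, mul_assoc P _ R]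
    _ = P * (R * (x ⊗ₜ[k] (1 : H))) * P := by rw [h1]
    _ = (P * R) * ((x ⊗ₜ[k] (1 : H)) * P) := by
        rw [← mul_assoc, mul_assoc (P * R)]
    _ = (x ⊗ₜ[k] (1 : H)) * P := by rw [hPR, one_mul]

/-- leg embeddings `H ⊗ H → H ⊗ (H ⊗ H)`. -/
def leg12 (t : H ⊗[k] H) : H ⊗[k] (H ⊗[k] H) := map LinearMap.id (ι₁ k H H) t
def leg13 (t : H ⊗[k] H) : H ⊗[k] (H ⊗[k] H) := map LinearMap.id (ι₂ k H H) t
def leg23 (t : H ⊗[k] H) : H ⊗[k] (H ⊗[k] H) := ι₂ k H (H ⊗[k] H) t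

lemma leg12_tmul (x y : H) : leg12 (x ⊗ₜ[k] y) = x ⊗ₜ[k] (y ⊗ₜ[k] (1 : H)) := rfl
lemma leg13_tmul (x y : H) : leg13 (x ⊗ₜ[k] y) = x ⊗ₜ[k] ((1 : H) ⊗ₜ[k] y) := rfl
lemma leg23_def (t : H ⊗[k] H) : leg23 t = (1 : H) ⊗ₜ[k] t := rfl

lemma leg12_add (s t : H ⊗[k] H) : leg12 (s + t) = leg12 s + leg12 t :=
  LinearMap.map_add _ s t

lemma leg12_mul (s t : H ⊗[k] H) : leg12 (s * t) = leg12 s * leg12 t :=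
  map_map_mul _ _ (fun _ _ => rfl)
    (fun x y => by simp [ι₁_apply, Algebra.TensorProduct.tmul_mul_tmul]) s t

lemma leg13_mul (s t : H ⊗[k] H) : leg13 (s * t) = leg13 s * leg13 t :=
  map_map_mul _ _ (fun _ _ => rfl)
    (fun x y => by simp [ι₂_apply, Algebra.TensorProduct.tmul_mul_tmul]) s t

lemma leg23_mul (s t : H ⊗[k] H) : leg23 (s * t) = leg23 s * leg23 t := by
  simp [leg23_def, Algebra.TensorProduct.tmul_mul_tmul]

lemma leg12_one : leg12 (1 : H ⊗[k] H) = 1 :=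
  map_map_one _ _ rfl (by rw [ι₁_apply, ← Algebra.TensorProduct.one_def])

lemma leg13_one : leg13 (1 : H ⊗[k] H) = 1 :=
  map_map_one _ _ rfl (by rw [ι₂_apply, ← Algebra.TensorProduct.one_def])

lemma leg23_one : leg23 (1 : H ⊗[k] H) = 1 := by
  rw [leg23_def, ← Algebra.TensorProduct.one_def]

lemma comm_leg12_leg13 {Y : H ⊗[k] H}
    (hY : ∀ x : H, Y * (x ⊗ₜ[k] (1 : H)) = (x ⊗ₜ[k] (1 : H)) * Y) (t : H ⊗[k] H) :
    leg12 t * leg13 Y = leg13 Y * leg12 t := by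
  induction t using TensorProduct.induction_on with
  | zero => simp [leg12]
  | add p q hp hq => rw [leg12_add, add_mul, mul_add, hp, hq]
  | tmul x y =>
      rw [leg12_tmul]
      rw [show leg13 Y = map LinearMap.id (ι₂ k H H) Y from rfl]
      rw [mul_tmul'', tmul_mul'']
      rw [← LinearMap.comp_apply, ← map_comp, ← LinearMap.comp_apply, ← map_comp,
        LinearMap.comp_id, LinearMap.comp_id]
      have e1 : LinearMap.mulLeft k (y ⊗ₜ[k] (1 : H)) ∘ₗ ι₂ k H H
          = TensorProduct.mk k H H y := by
        ext z
        simp [ι₂_apply, Algebra.TensorProduct.tmul_mul_tmul]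
      have e2 : LinearMap.mulRight k (y ⊗ₜ[k] (1 : H)) ∘ₗ ι₂ k H H
          = TensorProduct.mk k H H y := by
        ext z
        simp [ι₂_apply, Algebra.TensorProduct.tmul_mul_tmul]
      rw [e1, e2]
      exact (lc1_push' hY x (TensorProduct.mk k H H y)).symm

lemma comm_leg12_leg23 {Y : H ⊗[k] H}
    (hY : ∀ x : H, Y * (x ⊗ₜ[k] (1 : H)) = (x ⊗ₜ[k] (1 : H)) * Y) (t : H ⊗[k] H) :
    leg12 t * leg23 Y = leg23 Y * leg12 t := by
  induction t using TensorProduct.induction_on with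
  | zero => simp [leg12]
  | add p q hp hq => rw [leg12_add, add_mul, mul_add, hp, hq]
  | tmul x y =>
      rw [leg12_tmul, leg23_def, Algebra.TensorProduct.tmul_mul_tmul,
        Algebra.TensorProduct.tmul_mul_tmul, hY y, mul_one, one_mul]

lemma comm_leg12_omega (t : H ⊗[k] H) (c : H) :
    leg12 t * ((1 : H) ⊗ₜ[k] ((1 : H) ⊗ₜ[k] c))
      = ((1 : H) ⊗ₜ[k] ((1 : H) ⊗ₜ[k] c)) * leg12 t := by
  induction t using TensorProduct.induction_on with
  | zero => simp [leg12]
  | add p q hp hq => rw [leg12_add, add_mul, mul_add, hp, hq]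
  | tmul x y =>
      rw [leg12_tmul, Algebra.TensorProduct.tmul_mul_tmul,
        Algebra.TensorProduct.tmul_mul_tmul, Algebra.TensorProduct.tmul_mul_tmul,
        Algebra.TensorProduct.tmul_mul_tmul]
      rw [mul_one, one_mul, mul_one, one_mul, mul_one, one_mul]

end Main

section Main2
variable {k : Type*} [Field k] {H : Type*} [Ring H] [Algebra k H]
variable (hs : HopfStruct k H)

lemma mapidΔ_mul (s t : H ⊗[k] H) :
    map LinearMap.id hs.Δ (s * t)
      = map LinearMap.id hs.Δ s * map LinearMap.id hs.Δ t :=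
  map_map_mul _ _ (fun _ _ => rfl) hs.comul_mul s t

lemma mapidΔ_one : map LinearMap.id hs.Δ (1 : H ⊗[k] H) = 1 :=
  map_map_one _ _ rfl hs.comul_one

lemma mapΔid_mul (s t : H ⊗[k] H) :
    map hs.Δ LinearMap.id (s * t)
      = map hs.Δ LinearMap.id s * map hs.Δ LinearMap.id t :=
  map_map_mul _ _ hs.comul_mul (fun _ _ => rfl) s t

lemma mapΔid_one : map hs.Δ LinearMap.id (1 : H ⊗[k] H) = 1 :=
  map_map_one _ _ hs.comul_one rfl

lemma assoc_one {A B C : Type*} [Ring A] [Algebra k A] [Ring B] [Algebra k B]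
    [Ring C] [Algebra k C] :
    TensorProduct.assoc k A B C 1 = 1 := by
  rw [assoc_eq_alg, map_one]

variable {R P : H ⊗[k] H}

/-- `(id ⊗ Δ)(R⁻¹) = R⁻¹₁₃ R⁻¹₁₂`. -/
lemma mapidΔ_inv (hRP : R * P = 1) (hPR : P * R = 1)
    (LC5' : map LinearMap.id hs.Δ R = leg12 R * leg13 R) :
    map LinearMap.id hs.Δ P = leg13 P * leg12 P := by
  have hy : map LinearMap.id hs.Δ P * map LinearMap.id hs.Δ R = 1 := by
    rw [← mapidΔ_mul, hPR, mapidΔ_one]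
  have hz : map LinearMap.id hs.Δ R * (leg13 P * leg12 P) = 1 := by
    rw [LC5', mul_assoc, ← mul_assoc (leg13 R), ← leg13_mul, hRP, leg13_one, one_mul,
      ← leg12_mul, hRP, leg12_one]
  calc map LinearMap.id hs.Δ P
      = map LinearMap.id hs.Δ P * (map LinearMap.id hs.Δ R * (leg13 P * leg12 P)) := by
        rw [hz, mul_one]
    _ = (map LinearMap.id hs.Δ P * map LinearMap.id hs.Δ R) * (leg13 P * leg12 P) := by
        rw [mul_assoc]
    _ = leg13 P * leg12 P := by rw [hy, one_mul]

/-- `assoc ((Δ ⊗ id)(R⁻¹)) = R⁻¹₁₃ R⁻¹₂₃`. -/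
lemma mapΔid_inv (hRP : R * P = 1) (hPR : P * R = 1)
    (LC3' : TensorProduct.assoc k H H H (map hs.Δ LinearMap.id R) = leg23 R * leg13 R) :
    TensorProduct.assoc k H H H (map hs.Δ LinearMap.id P) = leg13 P * leg23 P := by
  have hy : TensorProduct.assoc k H H H (map hs.Δ LinearMap.id P)
      * TensorProduct.assoc k H H H (map hs.Δ LinearMap.id R) = 1 := by
    rw [← assoc_mul, ← mapΔid_mul, hPR, mapΔid_one, assoc_one]
  have hz : TensorProduct.assoc k H H H (map hs.Δ LinearMap.id R)
      * (leg13 P * leg23 P) = 1 := by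
    rw [LC3', mul_assoc, ← mul_assoc (leg13 R), ← leg13_mul, hRP, leg13_one, one_mul,
      ← leg23_mul, hRP, leg23_one]
  calc TensorProduct.assoc k H H H (map hs.Δ LinearMap.id P)
      = TensorProduct.assoc k H H H (map hs.Δ LinearMap.id P)
          * (TensorProduct.assoc k H H H (map hs.Δ LinearMap.id R)
            * (leg13 P * leg23 P)) := by rw [hz, mul_one]
    _ = (TensorProduct.assoc k H H H (map hs.Δ LinearMap.id P)
          * TensorProduct.assoc k H H H (map hs.Δ LinearMap.id R)) * (leg13 P * leg23 P) := by
        rw [mul_assoc]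
    _ = leg13 P * leg23 P := by rw [hy, one_mul]

lemma conj_comul_mul (hPR : P * R = 1) (a b : H) :
    conjComul k H R P hs.Δ (a * b)
      = conjComul k H R P hs.Δ a * conjComul k H R P hs.Δ b := by
  have e : (hs.Δ a * P) * (R * (hs.Δ b * P)) = hs.Δ a * hs.Δ b * P := by
    rw [mul_assoc (hs.Δ a) P, ← mul_assoc P R, hPR, one_mul, ← mul_assoc]
  rw [conjComul_apply, conjComul_apply, conjComul_apply, hs.comul_mul,
    mul_assoc R (hs.Δ a * P), e]

lemma conj_comul_one (hRP : R * P = 1) : conjComul k H R P hs.Δ (1 : H) = 1 := by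
  rw [conjComul_apply, hs.comul_one, one_mul, hRP]

lemma expandL (t : H ⊗[k] H) :
    map LinearMap.id (conjComul k H R P hs.Δ) t
      = leg23 R * (map LinearMap.id hs.Δ t * leg23 P) := by
  induction t using TensorProduct.induction_on with
  | zero => simp
  | add p q hp hq => simp only [LinearMap.map_add, hp, hq, mul_add, add_mul]
  | tmul x y =>
      rw [map_tmul, map_tmul, conjComul_apply, leg23_def, leg23_def,
        Algebra.TensorProduct.tmul_mul_tmul, Algebra.TensorProduct.tmul_mul_tmul]
      rw [LinearMap.id_coe, id_eq, mul_one, one_mul]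

lemma expandR (t : H ⊗[k] H) :
    map (conjComul k H R P hs.Δ) LinearMap.id t
      = (R ⊗ₜ[k] (1 : H)) * (map hs.Δ LinearMap.id t * (P ⊗ₜ[k] (1 : H))) := by
  induction t using TensorProduct.induction_on with
  | zero => simp
  | add p q hp hq => simp only [LinearMap.map_add, hp, hq, mul_add, add_mul]
  | tmul x y =>
      rw [map_tmul, map_tmul, conjComul_apply,
        Algebra.TensorProduct.tmul_mul_tmul, Algebra.TensorProduct.tmul_mul_tmul]
      rw [LinearMap.id_coe, id_eq, mul_one, one_mul]

lemma conj_coassoc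
    (h1 : ∀ x : H, R * (x ⊗ₜ[k] (1 : H)) = (x ⊗ₜ[k] (1 : H)) * R)
    (hRP : R * P = 1) (hPR : P * R = 1)
    (LC3' : TensorProduct.assoc k H H H (map hs.Δ LinearMap.id R) = leg23 R * leg13 R)
    (LC5' : map LinearMap.id hs.Δ R = leg12 R * leg13 R) (h : H) :
    map LinearMap.id (conjComul k H R P hs.Δ) (conjComul k H R P hs.Δ h)
      = TensorProduct.assoc k H H H
          (map (conjComul k H R P hs.Δ) LinearMap.id (conjComul k H R P hs.Δ h)) := by
  have h1P := lc1_inv hRP hPR h1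
  rw [expandL hs, expandR hs, conjComul_apply]
  rw [mapidΔ_mul, mapidΔ_mul, mapΔid_mul, mapΔid_mul]
  rw [mapidΔ_inv hs hRP hPR LC5', LC5']
  rw [assoc_mul, assoc_mul, assoc_mul, assoc_mul]
  rw [mapΔid_inv hs hRP hPR LC3', LC3', ← hs.coassoc h]
  rw [assoc_tmul_right, assoc_tmul_right]
  rw [show (map LinearMap.id ((mk k H H).flip (1:H)) R) = leg12 R from rfl,
    show (map LinearMap.id ((mk k H H).flip (1:H)) P) = leg12 P from rfl]
  simp only [mul_assoc]
  rw [← mul_assoc (leg23 R) (leg12 R), ← comm_leg12_leg23 h1 R, mul_assoc]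
  rw [comm_leg12_leg23 h1P P]

lemma chiL_mul (s t : H ⊗[k] H) :
    TensorProduct.lid k H (map hs.ε LinearMap.id (s * t))
      = TensorProduct.lid k H (map hs.ε LinearMap.id s)
        * TensorProduct.lid k H (map hs.ε LinearMap.id t) := by
  have h := linearMap_mul_of_tmul
    ((TensorProduct.lid k H).toLinearMap ∘ₗ map hs.ε LinearMap.id)
    (fun a b c d => by
      simp only [LinearMap.coe_comp, Function.comp_apply, LinearEquiv.coe_coe,
        Algebra.TensorProduct.tmul_mul_tmul, map_tmul, LinearMap.id_coe, id_eq, lid_tmul,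
        hs.counit_mul]
      rw [smul_mul_assoc, mul_smul_comm, smul_smul]) s t
  simpa using h

lemma chiR_mul (s t : H ⊗[k] H) :
    TensorProduct.rid k H (map LinearMap.id hs.ε (s * t))
      = TensorProduct.rid k H (map LinearMap.id hs.ε s)
        * TensorProduct.rid k H (map LinearMap.id hs.ε t) := by
  have h := linearMap_mul_of_tmul
    ((TensorProduct.rid k H).toLinearMap ∘ₗ map LinearMap.id hs.ε)
    (fun a b c d => by
      simp only [LinearMap.coe_comp, Function.comp_apply, LinearEquiv.coe_coe,
        Algebra.TensorProduct.tmul_mul_tmul, map_tmul, LinearMap.id_coe, id_eq, rid_tmul,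
        hs.counit_mul]
      rw [smul_mul_assoc, mul_smul_comm, smul_smul, mul_comm (hs.ε b) (hs.ε d)]) s t
  simpa using h

lemma chiL_one : TensorProduct.lid k H (map hs.ε LinearMap.id (1 : H ⊗[k] H)) = 1 := by
  rw [Algebra.TensorProduct.one_def, map_tmul, hs.counit_one]
  simp

lemma chiR_one : TensorProduct.rid k H (map LinearMap.id hs.ε (1 : H ⊗[k] H)) = 1 := by
  rw [Algebra.TensorProduct.one_def, map_tmul, hs.counit_one]
  simp

lemma chiL_P (hPR : P * R = 1)
    (LC2 : TensorProduct.lid k H (map hs.ε LinearMap.id R) = 1) :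
    TensorProduct.lid k H (map hs.ε LinearMap.id P) = 1 := by
  have h := chiL_mul hs P R
  rw [hPR, chiL_one, LC2, mul_one] at h
  exact h.symm

lemma chiR_P (hPR : P * R = 1)
    (LC4 : TensorProduct.rid k H (map LinearMap.id hs.ε R) = 1) :
    TensorProduct.rid k H (map LinearMap.id hs.ε P) = 1 := by
  have h := chiR_mul hs P R
  rw [hPR, chiR_one, LC4, mul_one] at h
  exact h.symm

lemma conj_counit_left (hPR : P * R = 1)
    (LC2 : TensorProduct.lid k H (map hs.ε LinearMap.id R) = 1) (h : H) :
    TensorProduct.lid k H (map hs.ε LinearMap.id (conjComul k H R P hs.Δ h)) = h := by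
  rw [conjComul_apply, chiL_mul, chiL_mul, LC2, hs.counit_left, chiL_P hs hPR LC2,
    mul_one, one_mul]

lemma conj_counit_right (hPR : P * R = 1)
    (LC4 : TensorProduct.rid k H (map LinearMap.id hs.ε R) = 1) (h : H) :
    TensorProduct.rid k H (map LinearMap.id hs.ε (conjComul k H R P hs.Δ h)) = h := by
  rw [conjComul_apply, chiR_mul, chiR_mul, LC4, hs.counit_right, chiR_P hs hPR LC4,
    mul_one, one_mul]

end Main2

section Main3
variable {k : Type*} [Field k] {H : Type*} [Ring H] [Algebra k H]

lemma map_map {M N A B C D : Type*} [AddCommGroup M] [Module k M] [AddCommGroup N]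
    [Module k N] [AddCommGroup A] [Module k A] [AddCommGroup B] [Module k B]
    [AddCommGroup C] [Module k C] [AddCommGroup D] [Module k D]
    (α : B →ₗ[k] C) (β : A →ₗ[k] B) (γ : N →ₗ[k] D) (δ : M →ₗ[k] N) (t : A ⊗[k] M) :
    map α γ (map β δ t) = map (α ∘ₗ β) (γ ∘ₗ δ) t := by
  rw [← LinearMap.comp_apply, ← map_comp]

variable (hs : HopfStruct k H)

lemma mul'_one : LinearMap.mul' k H (1 : H ⊗[k] H) = 1 := by
  rw [Algebra.TensorProduct.one_def, LinearMap.mul'_apply, one_mul]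

lemma S_mulRight (x : H) :
    hs.S ∘ₗ LinearMap.mulRight k x = LinearMap.mulLeft k (hs.S x) ∘ₗ hs.S := by
  ext a; simp [S_anti hs a x]

lemma S_mulLeft (x : H) :
    hs.S ∘ₗ LinearMap.mulLeft k x = LinearMap.mulRight k (hs.S x) ∘ₗ hs.S := by
  ext a; simp [S_anti hs x a]

lemma mulLR_comm (x y : H) :
    LinearMap.mulRight k y ∘ₗ LinearMap.mulLeft k x
      = LinearMap.mulLeft k x ∘ₗ LinearMap.mulRight k y := by
  ext a; simp [mul_assoc]

lemma mul'_map_eta_right (t : H ⊗[k] H) :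
    LinearMap.mul' k H (map LinearMap.id (Algebra.linearMap k H ∘ₗ hs.ε) t)
      = TensorProduct.rid k H (map LinearMap.id hs.ε t) := by
  induction t using TensorProduct.induction_on with
  | zero => simp
  | add p q hp hq => simp only [LinearMap.map_add, LinearEquiv.map_add, hp, hq]
  | tmul x y =>
      simp only [map_tmul, LinearMap.id_coe, id_eq, LinearMap.coe_comp,
        Function.comp_apply, Algebra.linearMap_apply, LinearMap.mul'_apply, rid_tmul]
      rw [← Algebra.commutes, ← Algebra.smul_def]

variable {R P : H ⊗[k] H}

lemma leg12_mul_leg13 (x y : H) (Y : H ⊗[k] H) :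
    leg12 (x ⊗ₜ[k] y) * leg13 Y
      = map (LinearMap.mulLeft k x) (TensorProduct.mk k H H y) Y := by
  rw [leg12_tmul, show leg13 Y = map LinearMap.id (ι₂ k H H) Y from rfl, mul_tmul'']
  rw [map_map]
  rw [LinearMap.comp_id]
  congr 1
  ext z
  simp [ι₂_apply, Algebra.TensorProduct.tmul_mul_tmul]

/-- the element `u = R'ᵢ S(R''ᵢ)`. -/
abbrev uElt (hs : HopfStruct k H) (R : H ⊗[k] H) : H :=
  LinearMap.mul' k H (map LinearMap.id hs.S R)

/-- the element `w = S(P'ᵢ) P''ᵢ`. -/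
abbrev wElt (hs : HopfStruct k H) (P : H ⊗[k] H) : H :=
  LinearMap.mul' k H (map hs.S LinearMap.id P)

/-- (C1): `m(R) · u = 1`. -/
lemma vu_one
    (h1 : ∀ x : H, R * (x ⊗ₜ[k] (1 : H)) = (x ⊗ₜ[k] (1 : H)) * R)
    (LC4 : TensorProduct.rid k H (map LinearMap.id hs.ε R) = 1)
    (LC5' : map LinearMap.id hs.Δ R = leg12 R * leg13 R) :
    LinearMap.mul' k H R * uElt hs R = 1 := by
  have A1 : LinearMap.mul' k H (map LinearMap.id
      (LinearMap.mul' k H ∘ₗ map LinearMap.id hs.S) (map LinearMap.id hs.Δ R)) = 1 := by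
    rw [map_map, LinearMap.id_comp]
    have hmap : (LinearMap.mul' k H ∘ₗ map LinearMap.id hs.S) ∘ₗ hs.Δ
        = Algebra.linearMap k H ∘ₗ hs.ε := by
      ext h
      simpa using hs.antipode_right h
    rw [hmap, mul'_map_eta_right, LC4]
  have A2 : ∀ s : H ⊗[k] H,
      LinearMap.mul' k H (map LinearMap.id
        (LinearMap.mul' k H ∘ₗ map LinearMap.id hs.S) (leg12 s * leg13 R))
      = LinearMap.mul' k H s * uElt hs R := by
    intro s
    induction s using TensorProduct.induction_on with
    | zero => simp [leg12]
    | add p q hp hq =>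
        simp only [leg12_add, add_mul, LinearMap.map_add, hp, hq]
    | tmul x y =>
        rw [leg12_mul_leg13, map_map, LinearMap.id_comp]
        have e2 : (LinearMap.mul' k H ∘ₗ map LinearMap.id hs.S) ∘ₗ TensorProduct.mk k H H y
            = LinearMap.mulLeft k y ∘ₗ hs.S := by
          ext z; simp
        rw [e2, mul'_map_mid, mulLR_comm,
          lc1_push h1 y (LinearMap.mulLeft k x) hs.S,
          ← LinearMap.mulLeft_mul, ← LinearMap.comp_id (LinearMap.mulLeft k (x * y)),
          mul'_map_left, LinearMap.mul'_apply]
  have h3 := A1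
  rw [LC5', A2 R] at h3
  exact h3

/-- (C2): `u · m(R) = 1`. -/
lemma uv_one
    (h1 : ∀ x : H, R * (x ⊗ₜ[k] (1 : H)) = (x ⊗ₜ[k] (1 : H)) * R)
    (LC4 : TensorProduct.rid k H (map LinearMap.id hs.ε R) = 1)
    (LC5' : map LinearMap.id hs.Δ R = leg12 R * leg13 R) :
    uElt hs R * LinearMap.mul' k H R = 1 := by
  have A1 : LinearMap.mul' k H (map LinearMap.id
      (LinearMap.mul' k H ∘ₗ map hs.S LinearMap.id) (map LinearMap.id hs.Δ R)) = 1 := by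
    rw [map_map, LinearMap.id_comp]
    have hmap : (LinearMap.mul' k H ∘ₗ map hs.S LinearMap.id) ∘ₗ hs.Δ
        = Algebra.linearMap k H ∘ₗ hs.ε := by
      ext h
      simpa using hs.antipode_left h
    rw [hmap, mul'_map_eta_right, LC4]
  have A2 : ∀ s : H ⊗[k] H,
      LinearMap.mul' k H (map LinearMap.id
        (LinearMap.mul' k H ∘ₗ map hs.S LinearMap.id) (leg12 s * leg13 R))
      = LinearMap.mul' k H (map LinearMap.id
          (LinearMap.mulRight k (LinearMap.mul' k H R) ∘ₗ hs.S) s) := by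
    intro s
    induction s using TensorProduct.induction_on with
    | zero => simp [leg12]
    | add p q hp hq =>
        simp only [leg12_add, add_mul, LinearMap.map_add, hp, hq]
    | tmul x y =>
        rw [leg12_mul_leg13, map_map, LinearMap.id_comp]
        have e2 : (LinearMap.mul' k H ∘ₗ map hs.S LinearMap.id) ∘ₗ TensorProduct.mk k H H y
            = LinearMap.mulLeft k (hs.S y) := by
          ext z; simp
        rw [e2, ← LinearMap.comp_id (LinearMap.mulLeft k (hs.S y)), mul'_map_mid,
          mulLR_comm, lc1_push h1 (hs.S y) (LinearMap.mulLeft k x) LinearMap.id,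
          ← LinearMap.mulLeft_mul, ← LinearMap.comp_id
            (LinearMap.mulLeft k (x * hs.S y)), mul'_map_left, map_id]
        simp only [map_tmul, LinearMap.id_coe, id_eq, LinearMap.coe_comp,
          Function.comp_apply, LinearMap.mulRight_apply, LinearMap.mul'_apply]
        rw [mul_assoc]
  have h3 := A1
  rw [LC5', A2 R] at h3
  rw [← LinearMap.comp_id (LinearMap.mulRight k (LinearMap.mul' k H R) ∘ₗ hs.S),
    LinearMap.comp_assoc, mul'_map_right] at h3
  exact h3

/-- (C4a): `m(s · R) = m(s) · m(R)`. -/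
lemma mul'_mul_R
    (h1 : ∀ x : H, R * (x ⊗ₜ[k] (1 : H)) = (x ⊗ₜ[k] (1 : H)) * R) (s : H ⊗[k] H) :
    LinearMap.mul' k H (s * R) = LinearMap.mul' k H s * LinearMap.mul' k H R := by
  induction s using TensorProduct.induction_on with
  | zero => simp
  | add p q hp hq => simp only [add_mul, LinearMap.map_add, hp, hq]
  | tmul x y =>
      rw [mul_tmul'', ← LinearMap.comp_id (LinearMap.mulLeft k y), mul'_map_mid,
        mulLR_comm, lc1_push h1 y (LinearMap.mulLeft k x) LinearMap.id,
        ← LinearMap.mulLeft_mul,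
        ← LinearMap.comp_id (LinearMap.mulLeft k (x * y)), mul'_map_left, map_id,
        LinearMap.id_coe, id_eq, LinearMap.mul'_apply]

/-- (C4b): `m(R · s) = m((m(R) ⊗ 1-twisted) s)`. -/
lemma mul'_R_mul
    (h1 : ∀ x : H, R * (x ⊗ₜ[k] (1 : H)) = (x ⊗ₜ[k] (1 : H)) * R) (s : H ⊗[k] H) :
    LinearMap.mul' k H (R * s)
      = LinearMap.mul' k H
          (map (LinearMap.mulRight k (LinearMap.mul' k H R)) LinearMap.id s) := by
  induction s using TensorProduct.induction_on with
  | zero => simp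
  | add p q hp hq => simp only [mul_add, LinearMap.map_add, hp, hq]
  | tmul x y =>
      rw [tmul_mul'', ← LinearMap.comp_id (LinearMap.mulRight k y), mul'_map_right,
        lc1_maps h1 x, ← LinearMap.comp_id (LinearMap.mulLeft k x), mul'_map_left,
        map_id, LinearMap.id_coe, id_eq]
      simp [mul_assoc]

end Main3


section Main4
variable {k : Type*} [Field k] {H : Type*} [Ring H] [Algebra k H]
variable (hs : HopfStruct k H) {R P : H ⊗[k] H}

/-- (C3): `w · m(R⁻¹) = 1`. -/
lemma w_mP
    (h1 : ∀ x : H, R * (x ⊗ₜ[k] (1 : H)) = (x ⊗ₜ[k] (1 : H)) * R)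
    (hRP : R * P = 1) (hPR : P * R = 1)
    (LC2 : TensorProduct.lid k H (map hs.ε LinearMap.id R) = 1)
    (LC3' : TensorProduct.assoc k H H H (map hs.Δ LinearMap.id R) = leg23 R * leg13 R) :
    wElt hs P * LinearMap.mul' k H P = 1 := by
  have h1P := lc1_inv hRP hPR h1
  have claim3a : ∀ t : H ⊗[k] H,
      LinearMap.mul' k H (map hs.S (LinearMap.mul' k H)
        (TensorProduct.assoc k H H H (map hs.Δ LinearMap.id t)))
      = TensorProduct.lid k H (map hs.ε LinearMap.id t) := by
    intro t
    induction t using TensorProduct.induction_on with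
    | zero => simp
    | add p q hp hq =>
        simp only [LinearMap.map_add, LinearEquiv.map_add, hp, hq]
    | tmul a b =>
        rw [map_tmul, LinearMap.id_coe, id_eq, assoc_tmul_right, map_map,
          LinearMap.comp_id]
        have e4 : LinearMap.mul' k H ∘ₗ (mk k H H).flip b = LinearMap.mulRight k b := by
          ext z; simp
        rw [e4, ← LinearMap.comp_id (LinearMap.mulRight k b), mul'_map_right,
          hs.antipode_left a, map_tmul, lid_tmul, LinearMap.id_coe, id_eq,
          ← Algebra.smul_def]
  have claim3b : ∀ s : H ⊗[k] H,
      LinearMap.mul' k H (map hs.S (LinearMap.mul' k H) (leg13 s * leg23 P))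
      = LinearMap.mul' k H
          (map hs.S (LinearMap.mulRight k (LinearMap.mul' k H P)) s) := by
    intro s
    induction s using TensorProduct.induction_on with
    | zero => simp [leg13]
    | add p q hp hq =>
        have : leg13 (p + q) = leg13 p + leg13 q := LinearMap.map_add _ p q
        simp only [this, add_mul, LinearMap.map_add, hp, hq]
    | tmul x y =>
        rw [leg13_tmul, leg23_def, Algebra.TensorProduct.tmul_mul_tmul, mul_one,
          mul_tmul'', LinearMap.mulLeft_one]
        rw [map_tmul, LinearMap.mul'_apply]
        rw [← LinearMap.comp_id (LinearMap.mulLeft k y), mul'_map_mid]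
        rw [show LinearMap.mulRight k y ∘ₗ LinearMap.id = LinearMap.mulRight k y from
          LinearMap.comp_id _]
        rw [lc1_maps h1P y, ← LinearMap.comp_id (LinearMap.mulLeft k y), mul'_map_left,
          map_id, LinearMap.id_coe, id_eq, map_tmul, LinearMap.mul'_apply,
          LinearMap.mulRight_apply]
  have hchain : TensorProduct.lid k H (map hs.ε LinearMap.id P) = 1 :=
    chiL_P hs hPR LC2
  rw [← claim3a P, mapΔid_inv hs hRP hPR LC3', claim3b P,
    ← LinearMap.comp_id (LinearMap.mulRight k (LinearMap.mul' k H P)),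
    mul'_map_right] at hchain
  exact hchain

/-- `u = m(R⁻¹)`, `w = m(R)`, and `u w = w u = 1`. -/
lemma uw_facts
    (h1 : ∀ x : H, R * (x ⊗ₜ[k] (1 : H)) = (x ⊗ₜ[k] (1 : H)) * R)
    (hRP : R * P = 1) (hPR : P * R = 1)
    (LC2 : TensorProduct.lid k H (map hs.ε LinearMap.id R) = 1)
    (LC3' : TensorProduct.assoc k H H H (map hs.Δ LinearMap.id R) = leg23 R * leg13 R)
    (LC4 : TensorProduct.rid k H (map LinearMap.id hs.ε R) = 1)
    (LC5' : map LinearMap.id hs.Δ R = leg12 R * leg13 R) :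
    uElt hs R * wElt hs P = 1 ∧ wElt hs P * uElt hs R = 1 := by
  have h1P := lc1_inv hRP hPR h1
  have hmPv : LinearMap.mul' k H P * LinearMap.mul' k H R = 1 := by
    have := mul'_mul_R h1 P
    rw [hPR, mul'_one] at this
    exact this.symm
  have hvmP : LinearMap.mul' k H R * LinearMap.mul' k H P = 1 := by
    have h := mul'_R_mul h1 P
    rw [hRP, mul'_one, lc1_maps h1P (LinearMap.mul' k H R),
      ← LinearMap.comp_id (LinearMap.mulLeft k (LinearMap.mul' k H R)), mul'_map_left,
      map_id, LinearMap.id_coe, id_eq] at h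
    exact h.symm
  have huv := uv_one hs h1 LC4 LC5'
  have hvu := vu_one hs h1 LC4 LC5'
  have humP : uElt hs R = LinearMap.mul' k H P := by
    calc uElt hs R = uElt hs R * (LinearMap.mul' k H R * LinearMap.mul' k H P) := by
          rw [hvmP, mul_one]
      _ = (uElt hs R * LinearMap.mul' k H R) * LinearMap.mul' k H P := by rw [mul_assoc]
      _ = LinearMap.mul' k H P := by rw [huv, one_mul]
  have hwu : wElt hs P * uElt hs R = 1 := by
    rw [humP]
    exact w_mP hs h1 hRP hPR LC2 LC3'
  have hwv : wElt hs P = LinearMap.mul' k H R := by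
    calc wElt hs P = wElt hs P * (uElt hs R * LinearMap.mul' k H R) := by
          rw [huv, mul_one]
      _ = (wElt hs P * uElt hs R) * LinearMap.mul' k H R := by rw [mul_assoc]
      _ = LinearMap.mul' k H R := by rw [hwu, one_mul]
  refine ⟨?_, hwu⟩
  rw [hwv]
  exact huv

end Main4

section Main5
variable {k : Type*} [Field k] {H : Type*} [Ring H] [Algebra k H]
variable (hs : HopfStruct k H) {R P : H ⊗[k] H}

/-- the twisted antipode `S^R`. -/
abbrev SRmap (hs : HopfStruct k H) (R P : H ⊗[k] H) : H →ₗ[k] H :=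
  (LinearMap.mulLeft k (uElt hs R)).comp
    ((LinearMap.mulRight k (wElt hs P)).comp hs.S)

lemma d1 (s : H ⊗[k] H) :
    LinearMap.mul' k H (map hs.S LinearMap.id (P * s))
      = LinearMap.mul' k H
          (map (LinearMap.mulRight k (wElt hs P) ∘ₗ hs.S) LinearMap.id s) := by
  induction s using TensorProduct.induction_on with
  | zero => simp
  | add p q hp hq => simp only [mul_add, LinearMap.map_add, hp, hq]
  | tmul x y =>
      rw [tmul_mul'', map_map, S_mulRight hs x, LinearMap.id_comp,
        mul'_map_left, ← LinearMap.comp_id (LinearMap.mulRight k y), mul'_map_right]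
      simp [mul_assoc]

lemma d2 (hPR : P * R = 1) :
    LinearMap.mul' k H
      (map (LinearMap.mulRight k (wElt hs P) ∘ₗ hs.S) LinearMap.id R) = 1 := by
  rw [← d1 hs R, hPR, map_map_one hs.S LinearMap.id (S_one hs) rfl, mul'_one]

lemma d3 (hPR : P * R = 1)
    (h1 : ∀ x : H, R * (x ⊗ₜ[k] (1 : H)) = (x ⊗ₜ[k] (1 : H)) * R) (s : H ⊗[k] H) :
    LinearMap.mul' k H (map (SRmap hs R P) LinearMap.id (R * s))
      = LinearMap.mul' k H
          (map (LinearMap.mulLeft k (uElt hs R) ∘ₗ hs.S) LinearMap.id s) := by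
  induction s using TensorProduct.induction_on with
  | zero => simp
  | add p q hp hq => simp only [mul_add, LinearMap.map_add, hp, hq]
  | tmul x y =>
      rw [tmul_mul'', map_map, LinearMap.id_comp]
      have eS : SRmap hs R P ∘ₗ LinearMap.mulRight k x
          = LinearMap.mulLeft k (uElt hs R * hs.S x)
              ∘ₗ (LinearMap.mulRight k (wElt hs P) ∘ₗ hs.S) := by
        ext a
        simp [S_anti hs a x, mul_assoc]
      rw [eS, mul'_map_left, ← LinearMap.comp_id (LinearMap.mulRight k y),
        mul'_map_right, d2 hs hPR]
      simp [mul_assoc]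

lemma mulRight_comp_linear (c₁ c₂ : H) (g : H →ₗ[k] H) :
    LinearMap.mulRight k (c₁ + c₂) ∘ₗ g
      = LinearMap.mulRight k c₁ ∘ₗ g + LinearMap.mulRight k c₂ ∘ₗ g := by
  ext a; simp [mul_add]

lemma d4 (t : H ⊗[k] H) :
    LinearMap.mul' k H
      (map (LinearMap.mulLeft k (uElt hs R) ∘ₗ hs.S) LinearMap.id (t * P))
    = LinearMap.mul' k H
        (map (LinearMap.mulRight k (LinearMap.mul' k H (map hs.S LinearMap.id t))
            ∘ₗ (LinearMap.mulLeft k (uElt hs R) ∘ₗ hs.S)) LinearMap.id P) := by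
  induction t using TensorProduct.induction_on with
  | zero =>
      rw [zero_mul, LinearMap.map_zero, LinearMap.map_zero, LinearMap.map_zero]
      rw [show LinearMap.mulRight k
          ((LinearMap.mul' k H) (0 : H ⊗[k] H)) ∘ₗ
            (LinearMap.mulLeft k (uElt hs R) ∘ₗ hs.S) = 0 from by
        ext a; simp]
      rw [map_zero_left, LinearMap.zero_apply, LinearMap.map_zero]
  | add p q hp hq =>
      rw [add_mul, LinearMap.map_add, LinearMap.map_add, LinearMap.map_add, hp, hq,
        LinearMap.map_add, mulRight_comp_linear, map_add_left, LinearMap.add_apply,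
        LinearMap.map_add]
  | tmul x y =>
      rw [mul_tmul'', map_map, LinearMap.id_comp]
      have eS2 : (LinearMap.mulLeft k (uElt hs R) ∘ₗ hs.S) ∘ₗ LinearMap.mulLeft k x
          = LinearMap.mulLeft k (uElt hs R)
              ∘ₗ (LinearMap.mulRight k (hs.S x) ∘ₗ hs.S) := by
        ext a; simp [S_anti hs x a]
      rw [eS2, ← LinearMap.comp_id (LinearMap.mulLeft k y), mul'_map_mid]
      congr 2
      ext a
      simp [mul_assoc]

lemma conj_antipode_left
    (h1 : ∀ x : H, R * (x ⊗ₜ[k] (1 : H)) = (x ⊗ₜ[k] (1 : H)) * R)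
    (hRP : R * P = 1) (hPR : P * R = 1)
    (LC2 : TensorProduct.lid k H (map hs.ε LinearMap.id R) = 1)
    (LC3' : TensorProduct.assoc k H H H (map hs.Δ LinearMap.id R) = leg23 R * leg13 R)
    (LC4 : TensorProduct.rid k H (map LinearMap.id hs.ε R) = 1)
    (LC5' : map LinearMap.id hs.Δ R = leg12 R * leg13 R) (h : H) :
    LinearMap.mul' k H (map (SRmap hs R P) LinearMap.id (conjComul k H R P hs.Δ h))
      = algebraMap k H (hs.ε h) := by
  have huw := (uw_facts hs h1 hRP hPR LC2 LC3' LC4 LC5').1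
  rw [conjComul_apply, d3 hs hPR h1, d4 hs, hs.antipode_left h]
  have hmr : LinearMap.mulRight k (algebraMap k H (hs.ε h))
      ∘ₗ (LinearMap.mulLeft k (uElt hs R) ∘ₗ hs.S)
      = hs.ε h • (LinearMap.mulLeft k (uElt hs R) ∘ₗ hs.S) := by
    ext a
    simp only [LinearMap.coe_comp, Function.comp_apply, LinearMap.mulRight_apply,
      LinearMap.mulLeft_apply, LinearMap.smul_apply]
    rw [Algebra.smul_def]
    exact (Algebra.commutes _ _).symm
  rw [hmr, map_smul_left, LinearMap.smul_apply, LinearMap.map_smul, mul'_map_left]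
  rw [show LinearMap.mul' k H (map hs.S LinearMap.id P) = wElt hs P from rfl]
  rw [huw, Algebra.algebraMap_eq_smul_one]

lemma d3r (hPR : P * R = 1) (s : H ⊗[k] H) :
    LinearMap.mul' k H (map LinearMap.id hs.S (s * R))
      = LinearMap.mul' k H (map (LinearMap.mulRight k (uElt hs R)) hs.S s) := by
  induction s using TensorProduct.induction_on with
  | zero => simp
  | add p q hp hq => simp only [add_mul, LinearMap.map_add, hp, hq]
  | tmul x y =>
      rw [mul_tmul'', map_map, LinearMap.id_comp, S_mulLeft hs y, mul'_map_right,
        ← LinearMap.comp_id (LinearMap.mulLeft k x), mul'_map_left]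
      simp [mul_assoc]

lemma d4r0 (hPR : P * R = 1) :
    LinearMap.mul' k H (map (LinearMap.mulRight k (uElt hs R)) hs.S P) = 1 := by
  rw [← d3r hs hPR P, hPR, map_map_one LinearMap.id hs.S rfl (S_one hs), mul'_one]

lemma d5r (hPR : P * R = 1) (s : H ⊗[k] H) :
    LinearMap.mul' k H (map LinearMap.id (SRmap hs R P) (s * P))
      = LinearMap.mul' k H
          (map LinearMap.id (LinearMap.mulRight k (wElt hs P) ∘ₗ hs.S) s) := by
  induction s using TensorProduct.induction_on with
  | zero => simp
  | add p q hp hq => simp only [add_mul, LinearMap.map_add, hp, hq]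
  | tmul x y =>
      rw [mul_tmul'', map_map, LinearMap.id_comp]
      have eS : SRmap hs R P ∘ₗ LinearMap.mulLeft k y
          = LinearMap.mulLeft k (uElt hs R)
              ∘ₗ (LinearMap.mulRight k (hs.S y * wElt hs P) ∘ₗ hs.S) := by
        ext a
        simp [S_anti hs y a, mul_assoc]
      rw [eS, ← LinearMap.comp_id (LinearMap.mulLeft k (uElt hs R)),
        LinearMap.comp_assoc]
      rw [show (LinearMap.id : H →ₗ[k] H)
          ∘ₗ (LinearMap.mulRight k (hs.S y * wElt hs P) ∘ₗ hs.S)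
        = LinearMap.mulRight k (hs.S y * wElt hs P) ∘ₗ hs.S from
          LinearMap.id_comp _]
      rw [mul'_map_mid, mul'_map_right, mulLR_comm, mul'_map_left, d4r0 hs hPR]
      simp [mul_assoc]

lemma d6r
    (h1 : ∀ x : H, R * (x ⊗ₜ[k] (1 : H)) = (x ⊗ₜ[k] (1 : H)) * R)
    (huw : uElt hs R * wElt hs P = 1) (s : H ⊗[k] H) :
    LinearMap.mul' k H
        (map LinearMap.id (LinearMap.mulRight k (wElt hs P) ∘ₗ hs.S) (R * s))
      = LinearMap.mul' k H (map LinearMap.id hs.S s) := by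
  induction s using TensorProduct.induction_on with
  | zero => simp
  | add p q hp hq => simp only [mul_add, LinearMap.map_add, hp, hq]
  | tmul x y =>
      rw [tmul_mul'', map_map, LinearMap.id_comp]
      have eS : (LinearMap.mulRight k (wElt hs P) ∘ₗ hs.S) ∘ₗ LinearMap.mulRight k y
          = LinearMap.mulLeft k (hs.S y)
              ∘ₗ (LinearMap.mulRight k (wElt hs P) ∘ₗ hs.S) := by
        ext a
        simp [S_anti hs a y, mul_assoc]
      rw [eS, mul'_map_mid, ← LinearMap.mulRight_mul,
        lc1_push' h1 (x * hs.S y) (LinearMap.mulRight k (wElt hs P) ∘ₗ hs.S),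
        ← LinearMap.comp_id (LinearMap.mulLeft k (x * hs.S y)), mul'_map_left,
        mul'_map_right, huw]
      simp [mul_assoc]

lemma conj_antipode_right
    (h1 : ∀ x : H, R * (x ⊗ₜ[k] (1 : H)) = (x ⊗ₜ[k] (1 : H)) * R)
    (hRP : R * P = 1) (hPR : P * R = 1)
    (LC2 : TensorProduct.lid k H (map hs.ε LinearMap.id R) = 1)
    (LC3' : TensorProduct.assoc k H H H (map hs.Δ LinearMap.id R) = leg23 R * leg13 R)
    (LC4 : TensorProduct.rid k H (map LinearMap.id hs.ε R) = 1)
    (LC5' : map LinearMap.id hs.Δ R = leg12 R * leg13 R) (h : H) :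
    LinearMap.mul' k H (map LinearMap.id (SRmap hs R P) (conjComul k H R P hs.Δ h))
      = algebraMap k H (hs.ε h) := by
  have huw := (uw_facts hs h1 hRP hPR LC2 LC3' LC4 LC5').1
  rw [conjComul_apply, ← mul_assoc, d5r hs hPR, d6r hs h1 huw, hs.antipode_right h]

end Main5


section Main6
variable {k : Type*} [Field k] {H : Type*} [Ring H] [Algebra k H]
variable (hs : HopfStruct k H)

lemma assoc_symm_tmul' (x : H) (p : H ⊗[k] H) :
    (TensorProduct.assoc k H H H).symm (x ⊗ₜ[k] p)
      = map (TensorProduct.mk k H H x) LinearMap.id p := by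
  induction p using TensorProduct.induction_on with
  | zero => simp
  | add a b ha hb => simp only [tmul_add, LinearEquiv.map_add, LinearMap.map_add, ha, hb]
  | tmul a b => simp

/-- unfold `braceRHS` into a single binary multiplication. -/
lemma braceRHS_apply (Δ Δ' : H →ₗ[k] H ⊗[k] H) (S : H →ₗ[k] H) (h : H) :
    braceRHS k H Δ Δ' S h
      = LinearMap.mul' k (H ⊗[k] (H ⊗[k] H))
          (map ((map LinearMap.id (ι₁ k H H)) ∘ₗ Δ')
            (LinearMap.mul' k (H ⊗[k] (H ⊗[k] H)) ∘ₗ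
              ((map ((ι₁ k H (H ⊗[k] H)) ∘ₗ S)
                ((map LinearMap.id (ι₂ k H H)) ∘ₗ Δ')) ∘ₗ Δ))
            (Δ h)) := by
  show (LinearMap.mul' k (H ⊗[k] (H ⊗[k] H)))
      ((map LinearMap.id (LinearMap.mul' k (H ⊗[k] (H ⊗[k] H))))
        ((map ((map LinearMap.id (ι₁ k H H)) ∘ₗ Δ')
          (map ((ι₁ k H (H ⊗[k] H)) ∘ₗ S) ((map LinearMap.id (ι₂ k H H)) ∘ₗ Δ')))
          ((map LinearMap.id Δ) (Δ h)))) = _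
  generalize Δ h = t
  induction t using TensorProduct.induction_on with
  | zero => simp
  | add a b ha hb => simp only [LinearMap.map_add, ha, hb]
  | tmul x y =>
      simp only [map_tmul, LinearMap.id_coe, id_eq, LinearMap.mul'_apply,
        LinearMap.coe_comp, Function.comp_apply]

variable {R P : H ⊗[k] H}

/-- collapse of the inner part of `braceRHS` for the untwisted `Δ`:
`S(c₁) c₂₁ ⊗ 1 ⊗ c₂₂ = 1 ⊗ 1 ⊗ c`. -/
lemma theta0 (c : H) :
    LinearMap.mul' k (H ⊗[k] (H ⊗[k] H))
        (map ((ι₁ k H (H ⊗[k] H)) ∘ₗ hs.S)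
          ((map LinearMap.id (ι₂ k H H)) ∘ₗ hs.Δ) (hs.Δ c))
      = (1 : H) ⊗ₜ[k] ((1 : H) ⊗ₜ[k] c) := by
  have eb : ∀ t : H ⊗[k] H,
      LinearMap.mul' k (H ⊗[k] (H ⊗[k] H))
          (map ((ι₁ k H (H ⊗[k] H)) ∘ₗ hs.S)
            ((map LinearMap.id (ι₂ k H H)) ∘ₗ hs.Δ) t)
        = map (LinearMap.mul' k H ∘ₗ map hs.S LinearMap.id) (ι₂ k H H)
            ((TensorProduct.assoc k H H H).symm (map LinearMap.id hs.Δ t)) := by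
    intro t
    induction t using TensorProduct.induction_on with
    | zero => simp
    | add p q hp hq =>
        simp only [LinearMap.map_add, LinearEquiv.map_add, hp, hq]
    | tmul x y =>
        rw [map_tmul, LinearMap.mul'_apply, LinearMap.coe_comp, Function.comp_apply,
          LinearMap.coe_comp, Function.comp_apply]
        rw [show (ι₁ k H (H ⊗[k] H)) (hs.S x) = hs.S x ⊗ₜ[k] (1 : H ⊗[k] H) from rfl]
        rw [mul_tmul'', LinearMap.mulLeft_one, map_map, LinearMap.comp_id,
          LinearMap.id_comp]
        rw [map_tmul, LinearMap.id_coe, id_eq, assoc_symm_tmul', map_map,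
          LinearMap.comp_id]
        have e9 : LinearMap.mulLeft k (hs.S x)
            = (LinearMap.mul' k H ∘ₗ map hs.S LinearMap.id) ∘ₗ (mk k H H) x := by
          ext z; simp
        rw [e9]
  rw [eb (hs.Δ c)]
  rw [hs.coassoc c, LinearEquiv.symm_apply_apply, map_map, LinearMap.comp_id]
  have hF : (LinearMap.mul' k H ∘ₗ map hs.S LinearMap.id) ∘ₗ hs.Δ
      = Algebra.linearMap k H ∘ₗ hs.ε := by
    ext a
    simpa using hs.antipode_left a
  rw [hF]
  have ec : ∀ t : H ⊗[k] H,
      map (Algebra.linearMap k H ∘ₗ hs.ε) (ι₂ k H H) t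
        = (1 : H) ⊗ₜ[k]
            (ι₂ k H H (TensorProduct.lid k H (map hs.ε LinearMap.id t))) := by
    intro t
    induction t using TensorProduct.induction_on with
    | zero => simp
    | add p q hp hq =>
        simp only [LinearMap.map_add, LinearEquiv.map_add, hp, hq, tmul_add]
    | tmul x y =>
        rw [map_tmul, map_tmul, lid_tmul, LinearMap.id_coe, id_eq,
          LinearMap.coe_comp, Function.comp_apply, Algebra.linearMap_apply,
          Algebra.algebraMap_eq_smul_one, LinearMap.map_smul]
        exact smul_tmul _ _ _
  rw [ec (hs.Δ c), hs.counit_left c]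
  rfl

lemma ed0 (y : H) (p : H ⊗[k] H) :
    leg12 p * ((1 : H) ⊗ₜ[k] ((1 : H) ⊗ₜ[k] y))
      = TensorProduct.assoc k H H H (p ⊗ₜ[k] y) := by
  induction p using TensorProduct.induction_on with
  | zero => simp [leg12]
  | add a b ha hb =>
      simp only [leg12_add, add_mul, ha, hb, add_tmul, LinearEquiv.map_add]
  | tmul a b =>
      rw [leg12_tmul, Algebra.TensorProduct.tmul_mul_tmul,
        Algebra.TensorProduct.tmul_mul_tmul, assoc_tmul, mul_one, mul_one, one_mul]

lemma brace_compat
    (h1 : ∀ x : H, R * (x ⊗ₜ[k] (1 : H)) = (x ⊗ₜ[k] (1 : H)) * R)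
    (hRP : R * P = 1) (hPR : P * R = 1)
    (LC5' : map LinearMap.id hs.Δ R = leg12 R * leg13 R) (h : H) :
    braceLHS k H hs.Δ (conjComul k H R P hs.Δ) h
      = braceRHS k H hs.Δ (conjComul k H R P hs.Δ) hs.S h := by
  have h1P := lc1_inv hRP hPR h1
  -- the LHS
  have hL : braceLHS k H hs.Δ (conjComul k H R P hs.Δ) h
      = (leg12 R * leg13 R) * (map LinearMap.id hs.Δ (hs.Δ h)
          * (leg13 P * leg12 P)) := by
    show map LinearMap.id hs.Δ (conjComul k H R P hs.Δ h) = _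
    rw [conjComul_apply, mapidΔ_mul, mapidΔ_mul, LC5', mapidΔ_inv hs hRP hPR LC5']
  -- the RHS
  rw [hL, braceRHS_apply]
  have hA : (map LinearMap.id (ι₁ k H H)) ∘ₗ (conjComul k H R P hs.Δ)
      = LinearMap.mulLeft k (leg12 R) ∘ₗ (LinearMap.mulRight k (leg12 P)
          ∘ₗ ((map LinearMap.id (ι₁ k H H)) ∘ₗ hs.Δ)) := by
    ext x
    show leg12 (conjComul k H R P hs.Δ x) = leg12 R * (leg12 (hs.Δ x) * leg12 P)
    rw [conjComul_apply, leg12_mul, leg12_mul]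
  have hΘ : LinearMap.mul' k (H ⊗[k] (H ⊗[k] H)) ∘ₗ
        ((map ((ι₁ k H (H ⊗[k] H)) ∘ₗ hs.S)
          ((map LinearMap.id (ι₂ k H H)) ∘ₗ (conjComul k H R P hs.Δ))) ∘ₗ hs.Δ)
      = LinearMap.mulLeft k (leg13 R) ∘ₗ (LinearMap.mulRight k (leg13 P)
          ∘ₗ ((ι₂ k H (H ⊗[k] H)) ∘ₗ (ι₂ k H H))) := by
    ext c
    show LinearMap.mul' k (H ⊗[k] (H ⊗[k] H))
        (map ((ι₁ k H (H ⊗[k] H)) ∘ₗ hs.S)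
          ((map LinearMap.id (ι₂ k H H)) ∘ₗ (conjComul k H R P hs.Δ)) (hs.Δ c))
      = leg13 R * (((1 : H) ⊗ₜ[k] ((1 : H) ⊗ₜ[k] c)) * leg13 P)
    have hC : (map LinearMap.id (ι₂ k H H)) ∘ₗ (conjComul k H R P hs.Δ)
        = LinearMap.mulLeft k (leg13 R) ∘ₗ (LinearMap.mulRight k (leg13 P)
            ∘ₗ ((map LinearMap.id (ι₂ k H H)) ∘ₗ hs.Δ)) := by
      ext x
      show leg13 (conjComul k H R P hs.Δ x) = leg13 R * (leg13 (hs.Δ x) * leg13 P)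
      rw [conjComul_apply, leg13_mul, leg13_mul]
    rw [hC]
    rw [mul'_map_mid_left _ _ _ (fun x => by
      show leg13 R * (ι₁ k H (H ⊗[k] H)) (hs.S x) = (ι₁ k H (H ⊗[k] H)) (hs.S x) * leg13 R
      rw [show (ι₁ k H (H ⊗[k] H)) (hs.S x) = hs.S x ⊗ₜ[k] (1 : H ⊗[k] H) from rfl,
        Algebra.TensorProduct.one_def]
      exact (comm_leg12_leg13 h1 (hs.S x ⊗ₜ[k] (1 : H))).symm)]
    rw [mul'_map_right]
    rw [theta0 hs c]
  rw [hA, hΘ]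
  rw [mul'_map_left]
  rw [mul'_map_fst_right _ _ _ (fun c => by
    show leg12 P * (leg13 R * (((1:H) ⊗ₜ[k] ((1:H) ⊗ₜ[k] c)) * leg13 P))
        = (leg13 R * (((1:H) ⊗ₜ[k] ((1:H) ⊗ₜ[k] c)) * leg13 P)) * leg12 P
    calc leg12 P * (leg13 R * (((1:H) ⊗ₜ[k] ((1:H) ⊗ₜ[k] c)) * leg13 P))
        = (leg12 P * leg13 R) * (((1:H) ⊗ₜ[k] ((1:H) ⊗ₜ[k] c)) * leg13 P) := by
          rw [mul_assoc]
      _ = leg13 R * ((leg12 P * ((1:H) ⊗ₜ[k] ((1:H) ⊗ₜ[k] c))) * leg13 P) := by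
          rw [comm_leg12_leg13 h1 P, mul_assoc, mul_assoc]
      _ = leg13 R * ((((1:H) ⊗ₜ[k] ((1:H) ⊗ₜ[k] c)) * (leg12 P * leg13 P))) := by
          rw [comm_leg12_omega P c, mul_assoc]
      _ = (leg13 R * (((1:H) ⊗ₜ[k] ((1:H) ⊗ₜ[k] c)) * leg13 P)) * leg12 P := by
          rw [comm_leg12_leg13 h1P P, ← mul_assoc, ← mul_assoc, ← mul_assoc,
            mul_assoc (leg13 R)])]
  rw [mul'_map_mid_left _ _ _ (fun x => by
    show leg13 R * (map LinearMap.id (ι₁ k H H) ∘ₗ hs.Δ) x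
        = (map LinearMap.id (ι₁ k H H) ∘ₗ hs.Δ) x * leg13 R
    exact (comm_leg12_leg13 h1 (hs.Δ x)).symm)]
  rw [mul'_map_right]
  have ed : LinearMap.mul' k (H ⊗[k] (H ⊗[k] H))
      (map ((map LinearMap.id (ι₁ k H H)) ∘ₗ hs.Δ)
        ((ι₂ k H (H ⊗[k] H)) ∘ₗ (ι₂ k H H)) (hs.Δ h))
      = TensorProduct.assoc k H H H (map hs.Δ LinearMap.id (hs.Δ h)) := by
    have edgen : ∀ t : H ⊗[k] H,
        LinearMap.mul' k (H ⊗[k] (H ⊗[k] H))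
          (map ((map LinearMap.id (ι₁ k H H)) ∘ₗ hs.Δ)
            ((ι₂ k H (H ⊗[k] H)) ∘ₗ (ι₂ k H H)) t)
        = TensorProduct.assoc k H H H (map hs.Δ LinearMap.id t) := by
      intro t
      induction t using TensorProduct.induction_on with
      | zero => simp
      | add p q hp hq => simp only [LinearMap.map_add, LinearEquiv.map_add, hp, hq]
      | tmul x y =>
          rw [map_tmul, LinearMap.mul'_apply, map_tmul, LinearMap.id_coe, id_eq]
          rw [show ((ι₂ k H (H ⊗[k] H)) ∘ₗ (ι₂ k H H)) y
            = (1 : H) ⊗ₜ[k] ((1 : H) ⊗ₜ[k] y) from rfl]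
          exact ed0 y (hs.Δ x)
    exact edgen (hs.Δ h)
  rw [ed, ← hs.coassoc h]
  simp only [mul_assoc]

end Main6

/-- Example 2.3(3).  Let `(H, Δ, ε, S)` be a Hopf algebra and
`R ∈ H ⊗ H` an invertible element satisfying the Long copairing conditions
(LC1)–(LC5).  Then the conjugated comultiplication `Δ_R(h) = R Δ(h) R⁻¹` makes
`(H, Δ_R, ε)` a Hopf algebra with antipode
`S^R(x) = R'ᵢ S(R''ᵢ) S(x) S((R'ᵢ)⁻¹) (R''ᵢ)⁻¹`, and `(H, Δ, Δ_R)` is a Hopf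
brace, i.e. the compatibility (2.1) holds with first comultiplication `Δ`
(antipode `S`) and second comultiplication `Δ_R`. -/
theorem long_copaired_gives_hopf_brace {k : Type*} [Field k]
    {H : Type*} [Ring H] [Algebra k H]
    (hs : HopfStruct k H) (R Rinv : H ⊗[k] H)
    (hR₁ : R * Rinv = 1) (hR₂ : Rinv * R = 1)
    -- (LC1) : `R'ᵢ x ⊗ R''ᵢ = x R'ᵢ ⊗ R''ᵢ`
    (LC1 : ∀ x : H, R * (x ⊗ₜ[k] (1 : H)) = (x ⊗ₜ[k] (1 : H)) * R)
    -- (LC2) : `ε(R'ᵢ) R''ᵢ = 1`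
    (LC2 : TensorProduct.lid k H
      (TensorProduct.map hs.ε (LinearMap.id : H →ₗ[k] H) R) = 1)
    -- (LC3) : `(Δ ⊗ id)(R) = R'ᵢ ⊗ r'ᵢ ⊗ r''ᵢ R''ᵢ`
    (LC3 : TensorProduct.assoc k H H H
        (TensorProduct.map hs.Δ (LinearMap.id : H →ₗ[k] H) R)
      = ι₂ k H (H ⊗[k] H) R
          * TensorProduct.map (LinearMap.id : H →ₗ[k] H) (ι₂ k H H) R)
    -- (LC4) : `R'ᵢ ε(R''ᵢ) = 1`
    (LC4 : TensorProduct.rid k H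
      (TensorProduct.map (LinearMap.id : H →ₗ[k] H) hs.ε R) = 1)
    -- (LC5) : `(id ⊗ Δ)(R) = R'ᵢ r'ᵢ ⊗ R''ᵢ ⊗ r''ᵢ`
    (LC5 : TensorProduct.map (LinearMap.id : H →ₗ[k] H) hs.Δ R
      = TensorProduct.map (LinearMap.id : H →ₗ[k] H) (ι₁ k H H) R
          * TensorProduct.map (LinearMap.id : H →ₗ[k] H) (ι₂ k H H) R) :
    -- `(H, Δ_R, ε)` is a Hopf algebra with antipode `S^R` ...
    (∃ hsR : HopfStruct k H,
      hsR.Δ = conjComul k H R Rinv hs.Δ ∧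
      hsR.ε = hs.ε ∧
      hsR.S = (LinearMap.mulLeft k
            (LinearMap.mul' k H
              (TensorProduct.map (LinearMap.id : H →ₗ[k] H) hs.S R))).comp
          ((LinearMap.mulRight k
            (LinearMap.mul' k H
              (TensorProduct.map hs.S (LinearMap.id : H →ₗ[k] H) Rinv))).comp hs.S)) ∧
    -- ... and `(H, Δ, Δ_R)` is a Hopf brace:
    (∀ h : H,
      braceLHS k H hs.Δ (conjComul k H R Rinv hs.Δ) h
        = braceRHS k H hs.Δ (conjComul k H R Rinv hs.Δ) hs.S h) := by
  have LC3' : TensorProduct.assoc k H H H (map hs.Δ LinearMap.id R)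
      = leg23 R * leg13 R := LC3
  have LC5' : map LinearMap.id hs.Δ R = leg12 R * leg13 R := LC5
  refine ⟨⟨{
    Δ := conjComul k H R Rinv hs.Δ
    ε := hs.ε
    S := SRmap hs R Rinv
    coassoc := conj_coassoc hs LC1 hR₁ hR₂ LC3' LC5'
    counit_left := conj_counit_left hs hR₂ LC2
    counit_right := conj_counit_right hs hR₂ LC4
    comul_mul := conj_comul_mul hs hR₂
    comul_one := conj_comul_one hs hR₁
    counit_mul := hs.counit_mul
    counit_one := hs.counit_one
    antipode_left := conj_antipode_left hs LC1 hR₁ hR₂ LC2 LC3' LC4 LC5'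
    antipode_right := conj_antipode_right hs LC1 hR₁ hR₂ LC2 LC3' LC4 LC5' },
    rfl, rfl, rfl⟩, fun h => brace_compat hs LC1 hR₁ hR₂ LC5' h⟩

end HopfPaper
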